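/- arXiv:0812.2589 — 8 statements merged into one kernel-verified Lean document; each statement's English description precedes it below -/
import Mathlib

section
/- Let t_1 < t_2 < ⋯ < t_{n+1} be distinct real points in an interval I. Then there exists a nonnegative function ψ supported on [t_1, t_{n+1}] with ∫ ψ(s) ds = 1 such that for every f ∈ C^n(I), the divided-difference combination ∑_{i=1}^{n+1} (-1)^{n+1-i} f(t_i) · V_n(t_1,…,t̂_i,…,t_{n+1}) / V_{n+1}(t_1,…,t_{n+1}) equals (1/n!) ∫ f^{(n)}(s) ψ(s) ds. -/
open MeasureTheory

/-- The Vandermonde product `∏_{i<j} (t j - t i)`. -/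
def vand {m : ℕ} (t : Fin m → ℝ) : ℝ :=
  ∏ p ∈ Finset.univ.filter (fun p : Fin m × Fin m => p.1 < p.2), (t p.2 - t p.1)

/-- The Vandermonde product of the `m` points obtained from `t` by omitting `t i`. -/
def vandOmit {m : ℕ} (t : Fin (m + 1) → ℝ) (i : Fin (m + 1)) : ℝ :=
  vand (t ∘ i.succAbove)

open Finset Polynomial

noncomputable section

noncomputable def W {m : ℕ} (t : Fin (m+1) → ℝ) (i : Fin (m+1)) : ℝ :=
  ∏ j ∈ Finset.univ.erase i, (t i - t j)



lemma W_ne_zero {m : ℕ} {t : Fin (m+1) → ℝ} (ht : Function.Injective t) (i : Fin (m+1)) :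
    W t i ≠ 0 := by
  apply Finset.prod_ne_zero_iff.2
  intro j hj
  have : j ≠ i := Finset.ne_of_mem_erase hj
  exact sub_ne_zero.2 fun h => this (ht h.symm)

lemma leadingCoeff_basis {m : ℕ} {t : Fin (m+1) → ℝ} (ht : Function.Injective t)
    (i : Fin (m+1)) :
    (Lagrange.basis Finset.univ t i).coeff m = (W t i)⁻¹ := by
  have hdeg : (Lagrange.basis Finset.univ t i).natDegree = m := by
    rw [Lagrange.natDegree_basis (Function.Injective.injOn ht) (Finset.mem_univ i)]
    simp
  have : (Lagrange.basis Finset.univ t i).coeff m = (Lagrange.basis Finset.univ t i).leadingCoeff := by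
    rw [Polynomial.leadingCoeff, hdeg]
  rw [this, Lagrange.basis, Polynomial.leadingCoeff_prod]
  rw [W, ← Finset.prod_inv_distrib]
  apply Finset.prod_congr rfl
  intro j hj
  have hne : t i ≠ t j := fun h => (Finset.ne_of_mem_erase hj) (ht h.symm)
  rw [Lagrange.basisDivisor, Polynomial.leadingCoeff_mul, Polynomial.leadingCoeff_C,
    (Polynomial.monic_X_sub_C (t j)).leadingCoeff, mul_one]

/-- Key algebraic lemma: divided difference of a polynomial of degree < m+1 is its m-th coeff. -/
lemma ddPoly {m : ℕ} {t : Fin (m+1) → ℝ} (ht : Function.Injective t)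
    (p : ℝ[X]) (hdeg : p.degree < (m+1 : ℕ)) :
    ∑ i : Fin (m+1), p.eval (t i) / W t i = p.coeff m := by
  have hcard : (Finset.univ : Finset (Fin (m+1))).card = m + 1 := by simp
  have h := Lagrange.eq_interpolate (f := p) (Function.Injective.injOn ht) (by rw [hcard]; exact_mod_cast hdeg)
  conv_rhs => rw [h]
  rw [Lagrange.interpolate_apply, Polynomial.finset_sum_coeff]
  apply Finset.sum_congr rfl
  intro i _
  rw [Polynomial.coeff_C_mul, leadingCoeff_basis ht i, div_eq_mul_inv]





lemma vand_split {m : ℕ} (t : Fin (m+1) → ℝ) (i : Fin (m+1)) :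
    vand t = ((-1:ℝ))^(m - (i:ℕ)) * W t i * vandOmit t i := by
  classical
  set F := Finset.univ.filter (fun p : Fin (m+1) × Fin (m+1) => p.1 < p.2) with hF
  have hsplit1 : vand t
      = (∏ p ∈ F.filter (fun p => p.1 = i), (t p.2 - t p.1)) *
        ∏ p ∈ F.filter (fun p => ¬ p.1 = i), (t p.2 - t p.1) := by
    rw [vand, ← Finset.prod_filter_mul_prod_filter_not F (fun p => p.1 = i)]
  have hsplit2 : (∏ p ∈ F.filter (fun p => ¬ p.1 = i), (t p.2 - t p.1))
      = (∏ p ∈ (F.filter (fun p => ¬ p.1 = i)).filter (fun p => p.2 = i), (t p.2 - t p.1)) *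
        ∏ p ∈ (F.filter (fun p => ¬ p.1 = i)).filter (fun p => ¬ p.2 = i), (t p.2 - t p.1) := by
    rw [← Finset.prod_filter_mul_prod_filter_not _ (fun p => p.2 = i)]
  have hP1 : (∏ p ∈ F.filter (fun p => p.1 = i), (t p.2 - t p.1))
      = ∏ j ∈ Finset.Ioi i, (t j - t i) := by
    apply Finset.prod_bij (fun p _ => p.2)
    · intro p hp
      simp only [hF, Finset.mem_filter, Finset.mem_univ, true_and] at hp
      simp [Finset.mem_Ioi, ← hp.2, hp.1]
    · intro p hp q hq hpq
      simp only [hF, Finset.mem_filter, Finset.mem_univ, true_and] at hp hq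
      exact Prod.ext (hp.2.trans hq.2.symm) hpq
    · intro j hj
      refine ⟨(i, j), ?_, rfl⟩
      simp only [hF, Finset.mem_filter, Finset.mem_univ, true_and]
      exact ⟨Finset.mem_Ioi.1 hj, trivial⟩
    · intro p hp
      simp only [hF, Finset.mem_filter, Finset.mem_univ, true_and] at hp
      rw [hp.2]
  have hP2 : (∏ p ∈ (F.filter (fun p => ¬ p.1 = i)).filter (fun p => p.2 = i), (t p.2 - t p.1))
      = ∏ j ∈ Finset.Iio i, (t i - t j) := by
    apply Finset.prod_bij (fun p _ => p.1)
    · intro p hp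
      simp only [hF, Finset.mem_filter, Finset.mem_univ, true_and] at hp
      simp [Finset.mem_Iio, ← hp.2, hp.1.1]
    · intro p hp q hq hpq
      simp only [hF, Finset.mem_filter, Finset.mem_univ, true_and] at hp hq
      exact Prod.ext hpq (hp.2.trans hq.2.symm)
    · intro j hj
      refine ⟨(j, i), ?_, rfl⟩
      simp only [hF, Finset.mem_filter, Finset.mem_univ, true_and]
      exact ⟨⟨Finset.mem_Iio.1 hj, (Finset.mem_Iio.1 hj).ne⟩, trivial⟩
    · intro p hp
      simp only [hF, Finset.mem_filter, Finset.mem_univ, true_and] at hp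
      rw [hp.2]
  have hP3 : (∏ p ∈ (F.filter (fun p => ¬ p.1 = i)).filter (fun p => ¬ p.2 = i), (t p.2 - t p.1))
      = vandOmit t i := by
    rw [vandOmit, vand, eq_comm]
    apply Finset.prod_bij (fun (q : Fin m × Fin m) _ => (i.succAbove q.1, i.succAbove q.2))
    · intro q hq
      simp only [Finset.mem_filter, Finset.mem_univ, true_and] at hq ⊢
      refine ⟨⟨?_, ?_⟩, ?_⟩
      · simp only [hF, Finset.mem_filter, Finset.mem_univ, true_and]
        exact (Fin.strictMono_succAbove i) hq
      · exact Fin.succAbove_ne i q.1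
      · exact Fin.succAbove_ne i q.2
    · intro p hp q hq hpq
      have h1 := congrArg Prod.fst hpq
      have h2 := congrArg Prod.snd hpq
      simp only at h1 h2
      exact Prod.ext ((Fin.succAbove_right_injective) h1) ((Fin.succAbove_right_injective) h2)
    · intro p hp
      simp only [hF, Finset.mem_filter, Finset.mem_univ, true_and] at hp
      obtain ⟨q1, hq1⟩ := Fin.exists_succAbove_eq (fun h => hp.1.2 h : p.1 ≠ i)
      obtain ⟨q2, hq2⟩ := Fin.exists_succAbove_eq (fun h => hp.2 h : p.2 ≠ i)
      refine ⟨(q1, q2), ?_, ?_⟩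
      · simp only [Finset.mem_filter, Finset.mem_univ, true_and]
        have := hp.1.1
        rw [← hq1, ← hq2] at this
        exact (Fin.strictMono_succAbove i).lt_iff_lt.1 this
      · simp [hq1, hq2]
    · intro q hq
      simp [Function.comp]
  have hsign : (∏ j ∈ Finset.Ioi i, (t j - t i))
      = ((-1:ℝ))^(m - (i:ℕ)) * ∏ j ∈ Finset.Ioi i, (t i - t j) := by
    have : ∀ j ∈ Finset.Ioi i, (t j - t i) = (-1) * (t i - t j) := by intros; ring
    rw [Finset.prod_congr rfl this, Finset.prod_mul_distrib, Finset.prod_const]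
    congr 2
    rw [Fin.card_Ioi]
    omega
  have hW : W t i = (∏ j ∈ Finset.Ioi i, (t i - t j)) * ∏ j ∈ Finset.Iio i, (t i - t j) := by
    rw [W, ← Finset.prod_union (by
      rw [Finset.disjoint_left]
      intro j h1 h2
      exact absurd (Finset.mem_Iio.1 h2) (not_lt.2 (le_of_lt (Finset.mem_Ioi.1 h1))))]
    apply Finset.prod_congr _ (fun _ _ => rfl)
    ext j
    simp only [Finset.mem_erase, Finset.mem_univ, and_true, Finset.mem_union, Finset.mem_Ioi,
      Finset.mem_Iio]
    constructor
    · intro h; exact (Ne.lt_or_gt h.symm).symm.imp id id |>.symm.imp id id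
    · rintro (h | h) he <;> simp [he] at h
  rw [hsplit1, hsplit2, hP1, hP2, hP3, hsign, hW]
  ring



variable {m : ℕ} {t : Fin (m+2) → ℝ}

def Wtail (t : Fin (m+2) → ℝ) (k : Fin (m+2)) : ℝ :=
  ∏ j ∈ (Finset.univ.erase k).erase 0, (t k - t j)

def Whead (t : Fin (m+2) → ℝ) (k : Fin (m+2)) : ℝ :=
  ∏ j ∈ (Finset.univ.erase k).erase (Fin.last (m+1)), (t k - t j)

lemma sub_ne {i j : Fin (m+2)} (ht : Function.Injective t) (h : i ≠ j) : t i - t j ≠ 0 :=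
  sub_ne_zero.2 fun hh => h (ht hh)

lemma Wtail_ne_zero (ht : Function.Injective t) (k : Fin (m+2)) : Wtail t k ≠ 0 :=
  Finset.prod_ne_zero_iff.2 fun j hj =>
    sub_ne ht (Ne.symm (Finset.ne_of_mem_erase (Finset.mem_of_mem_erase hj)))

lemma Whead_ne_zero (ht : Function.Injective t) (k : Fin (m+2)) : Whead t k ≠ 0 :=
  Finset.prod_ne_zero_iff.2 fun j hj =>
    sub_ne ht (Ne.symm (Finset.ne_of_mem_erase (Finset.mem_of_mem_erase hj)))

lemma W_ne_zero' {m : ℕ} {t : Fin (m+1) → ℝ} (ht : Function.Injective t) (i : Fin (m+1)) :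
    W t i ≠ 0 :=
  Finset.prod_ne_zero_iff.2 fun j hj => sub_ne_zero.2 fun hh => (Finset.ne_of_mem_erase hj) (ht hh.symm)

lemma W_eq_tail (k : Fin (m+2)) (hk : k ≠ 0) : W t k = (t k - t 0) * Wtail t k := by
  rw [W, Wtail, ← Finset.mul_prod_erase _ _ (Finset.mem_erase.2 ⟨Ne.symm hk, Finset.mem_univ 0⟩)]

lemma W_eq_head (k : Fin (m+2)) (hk : k ≠ Fin.last (m+1)) :
    W t k = (t k - t (Fin.last (m+1))) * Whead t k := by
  rw [W, Whead, ← Finset.mul_prod_erase _ _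
    (Finset.mem_erase.2 ⟨Ne.symm hk, Finset.mem_univ _⟩)]

lemma W_tail_comp (i : Fin (m+1)) : W (t ∘ Fin.succ) i = Wtail t i.succ := by
  rw [W, Wtail]
  apply Finset.prod_bij (fun (j : Fin (m+1)) _ => j.succ)
  · intro j hj
    simp only [Finset.mem_erase, Finset.mem_univ, and_true] at hj ⊢
    exact ⟨Fin.succ_ne_zero j, fun h => hj (Fin.succ_injective _ h)⟩
  · intro p _ q _ hpq
    exact Fin.succ_injective _ hpq
  · intro k hk
    simp only [Finset.mem_erase, Finset.mem_univ, and_true] at hk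
    obtain ⟨j, hj⟩ := Fin.exists_succ_eq.2 hk.1
    exact ⟨j, Finset.mem_erase.2 ⟨fun h => hk.2 (by rw [← hj, h]), Finset.mem_univ _⟩, hj⟩
  · intro j _
    rfl

lemma W_head_comp (i : Fin (m+1)) : W (t ∘ Fin.castSucc) i = Whead t i.castSucc := by
  rw [W, Whead]
  apply Finset.prod_bij (fun (j : Fin (m+1)) _ => j.castSucc)
  · intro j hj
    simp only [Finset.mem_erase, Finset.mem_univ, and_true] at hj ⊢
    exact ⟨Fin.castSucc_lt_last j |>.ne, fun h => hj (Fin.castSucc_injective _ h)⟩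
  · intro p _ q _ hpq
    exact Fin.castSucc_injective _ hpq
  · intro k hk
    simp only [Finset.mem_erase, Finset.mem_univ, and_true] at hk
    obtain ⟨j, hj⟩ := Fin.exists_castSucc_eq.2 hk.1
    exact ⟨j, Finset.mem_erase.2 ⟨fun h => hk.2 (by rw [← hj, h]), Finset.mem_univ _⟩, hj⟩
  · intro j _
    rfl

lemma last_ne_zero' : (Fin.last (m+1)) ≠ 0 := by
  simp [Fin.ext_iff]

/-- The key three-term identity behind the B-spline recurrence. -/
lemma dd_rec (ht : Function.Injective t) (a : Fin (m+2) → ℝ) (s : ℝ) :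
    ∑ i : Fin (m+2), (t i - s) * a i / W t i
      = ((t (Fin.last (m+1)) - s) * ∑ i : Fin (m+1), a i.succ / W (t ∘ Fin.succ) i
        + (s - t 0) * ∑ i : Fin (m+1), a i.castSucc / W (t ∘ Fin.castSucc) i)
        / (t (Fin.last (m+1)) - t 0) := by
  have hL0 : t (Fin.last (m+1)) - t 0 ≠ 0 := sub_ne ht last_ne_zero'
  have h1 : ∑ i : Fin (m+1), a i.succ / W (t ∘ Fin.succ) i
      = ∑ k : Fin (m+2), (if k = 0 then 0 else a k / Wtail t k) := by
    conv_rhs => rw [Fin.sum_univ_succ]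
    rw [if_pos rfl, zero_add]
    exact Finset.sum_congr rfl fun i _ => by
      rw [if_neg (Fin.succ_ne_zero i), W_tail_comp]
  have h2 : ∑ i : Fin (m+1), a i.castSucc / W (t ∘ Fin.castSucc) i
      = ∑ k : Fin (m+2), (if k = Fin.last (m+1) then 0 else a k / Whead t k) := by
    conv_rhs => rw [Fin.sum_univ_castSucc]
    rw [if_pos rfl, add_zero]
    exact Finset.sum_congr rfl fun i _ => by
      rw [if_neg (Fin.castSucc_lt_last i).ne, W_head_comp]
  rw [h1, h2, Finset.mul_sum, Finset.mul_sum, ← Finset.sum_add_distrib, Finset.sum_div]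
  apply Finset.sum_congr rfl
  intro k _
  by_cases hk0 : k = 0
  · subst hk0
    rw [if_pos rfl, if_neg (Ne.symm last_ne_zero'), mul_zero, zero_add,
      W_eq_head 0 (Ne.symm last_ne_zero')]
    have h := Whead_ne_zero ht (0 : Fin (m+2))
    have h2 := sub_ne ht (Ne.symm (last_ne_zero' (m := m)))
    field_simp
    ring
  · by_cases hkl : k = Fin.last (m+1)
    · subst hkl
      rw [if_pos rfl, if_neg hk0, mul_zero, add_zero, W_eq_tail _ hk0]
      have h := Wtail_ne_zero ht (Fin.last (m+1))
      field_simp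
      try ring
      try exact Or.inl trivial
    · rw [if_neg hk0, if_neg hkl, W_eq_tail k hk0]
      have e2 : Whead t k = (t k - t 0) * Wtail t k / (t k - t (Fin.last (m+1))) := by
        rw [eq_div_iff (sub_ne ht hkl), mul_comm, ← W_eq_head k hkl, W_eq_tail k hk0]
      rw [e2]
      have h1 := Wtail_ne_zero ht k
      have h3 := sub_ne ht hk0
      have h4 := sub_ne ht hkl
      field_simp
      ring



def tp (k : ℕ) (c s : ℝ) : ℝ := if s ≤ c then (c - s)^k else 0

lemma tp_nonneg (k : ℕ) (c s : ℝ) : 0 ≤ tp k c s := by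
  rw [tp]; split
  · exact pow_nonneg (sub_nonneg.2 ‹_›) k
  · exact le_refl 0

lemma tp_succ (k : ℕ) (c s : ℝ) : tp (k+1) c s = (c - s) * tp k c s := by
  rw [tp, tp]; split
  · ring
  · ring

lemma tp_of_lt {c s : ℝ} (k : ℕ) (h : c < s) : tp k c s = 0 := if_neg (not_le.2 h)

lemma tp_of_le {c s : ℝ} (k : ℕ) (h : s ≤ c) : tp k c s = (c - s)^k := if_pos h

lemma coeff_pow_X_sub_C {m k : ℕ} (hk : k ≤ m) (s : ℝ) :
    ((X - C s) ^ k).coeff m = if k = m then 1 else 0 := by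
  have hnd : ((X - C s) ^ k).natDegree = k := by
    rw [natDegree_pow, natDegree_X_sub_C, mul_one]
  by_cases h : k = m
  · subst h
    rw [if_pos rfl]
    have h2 := ((monic_X_sub_C s).pow k).coeff_natDegree
    rwa [hnd] at h2
  · rw [if_neg h]
    exact Polynomial.coeff_eq_zero_of_natDegree_lt (by omega)

/-- Divided difference of the (un)truncated power when `s` is left of all nodes. -/
lemma ddTP {m k : ℕ} {t : Fin (m+1) → ℝ} (ht : StrictMono t) (hk : k ≤ m) {s : ℝ}
    (hs : s ≤ t 0) :
    ∑ i : Fin (m+1), tp k (t i) s / W t i = if k = m then 1 else 0 := by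
  have h1 : ∀ i : Fin (m+1), tp k (t i) s = ((X - C s) ^ k).eval (t i) := by
    intro i
    rw [tp_of_le k (hs.trans (ht.monotone (Fin.zero_le i)))]
    simp
  rw [Finset.sum_congr rfl (fun i _ => by rw [h1 i]),
    ddPoly ht.injective _ (by
      rw [Polynomial.degree_pow, Polynomial.degree_X_sub_C]
      simp only [nsmul_eq_mul, mul_one]
      exact_mod_cast Nat.lt_succ_of_le hk),
    coeff_pow_X_sub_C hk]

lemma strictMono_comp_succ {m : ℕ} {t : Fin (m+2) → ℝ} (ht : StrictMono t) :
    StrictMono (t ∘ Fin.succ) := fun a b h => ht (Fin.succ_lt_succ_iff.2 h)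

lemma strictMono_comp_castSucc {m : ℕ} {t : Fin (m+2) → ℝ} (ht : StrictMono t) :
    StrictMono (t ∘ Fin.castSucc) := fun a b h => ht (Fin.castSucc_lt_castSucc_iff.2 h)

/-- Nonnegativity of the B-spline kernel. -/
lemma Bnonneg : ∀ (m : ℕ) (t : Fin (m+2) → ℝ), StrictMono t → ∀ s : ℝ,
    0 ≤ ∑ i, tp m (t i) s / W t i := by
  intro m
  induction m with
  | zero =>
    intro t ht s
    have e0 : (Finset.univ.erase (0 : Fin 2)) = {1} := by decide
    have e1 : (Finset.univ.erase (1 : Fin 2)) = {0} := by decide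
    have hW0 : W t 0 = t 0 - t 1 := by rw [W, e0, Finset.prod_singleton]
    have hW1 : W t 1 = t 1 - t 0 := by rw [W, e1, Finset.prod_singleton]
    have h01 : t 0 < t 1 := ht (by decide)
    rw [Fin.sum_univ_two, hW0, hW1]
    by_cases h0 : s ≤ t 0
    · have h1 : s ≤ t 1 := h0.trans h01.le
      rw [tp_of_le 0 h0, tp_of_le 0 h1]
      have : (t 0 - s) ^ 0 / (t 0 - t 1) + (t 1 - s) ^ 0 / (t 1 - t 0) = 0 := by
        have hne : t 1 - t 0 ≠ 0 := sub_ne_zero.2 h01.ne'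
        have hne' : t 0 - t 1 ≠ 0 := sub_ne_zero.2 h01.ne
        field_simp
        try ring
      exact le_of_eq this.symm
    · by_cases h1 : s ≤ t 1
      · rw [tp_of_lt 0 (not_le.1 h0), tp_of_le 0 h1]
        have : (0:ℝ) / (t 0 - t 1) = 0 := zero_div _
        rw [this, zero_add]
        exact div_nonneg (by rw [pow_zero]; exact zero_le_one) (by linarith)
      · rw [tp_of_lt 0 (not_le.1 h0), tp_of_lt 0 (not_le.1 h1)]
        simp
  | succ m IH =>
    intro t ht s
    by_cases hs0 : s ≤ t 0
    · rw [ddTP ht (by omega) hs0, if_neg (by omega)]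
    · by_cases hsl : t (Fin.last (m+2)) < s
      · have : ∀ i : Fin (m+3), tp (m+1) (t i) s / W t i = 0 := by
          intro i
          rw [tp_of_lt _ (lt_of_le_of_lt (ht.monotone (Fin.le_last i)) hsl), zero_div]
        rw [Finset.sum_congr rfl (fun i _ => this i)]
        simp
      · push_neg at hsl
        have key : ∑ i, tp (m+1) (t i) s / W t i
            = ∑ i : Fin (m+3), (t i - s) * tp m (t i) s / W t i := by
          exact Finset.sum_congr rfl (fun i _ => by rw [tp_succ])
        rw [key, dd_rec ht.injective (fun i => tp m (t i) s) s]
        have hlast0 : t 0 < t (Fin.last (m+2)) := ht (by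
          rw [Fin.lt_def]; simp)
        apply div_nonneg _ (by linarith)
        apply add_nonneg
        · exact mul_nonneg (by linarith)
            (IH (t ∘ Fin.succ) (strictMono_comp_succ ht) s)
        · exact mul_nonneg (by linarith [not_le.1 hs0])
            (IH (t ∘ Fin.castSucc) (strictMono_comp_castSucc ht) s)

section Taylor

variable {A B : ℝ} {f : ℝ → ℝ} {n : ℕ}

lemma uIcc_subset_Ioo {a b : ℝ} (ha : a ∈ Set.Ioo A B) (hb : b ∈ Set.Ioo A B) :
    Set.uIcc a b ⊆ Set.Ioo A B :=
  Set.ordConnected_Ioo.uIcc_subset ha hb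

lemma hasDerivAt_iter (hf : ContDiffOn ℝ n f (Set.Ioo A B)) {k : ℕ} (hk : k < n) {x : ℝ}
    (hx : x ∈ Set.Ioo A B) :
    HasDerivAt (iteratedDerivWithin k f (Set.Ioo A B))
      (iteratedDerivWithin (k+1) f (Set.Ioo A B) x) x := by
  have hu : UniqueDiffOn ℝ (Set.Ioo A B) := isOpen_Ioo.uniqueDiffOn
  have hd : DifferentiableWithinAt ℝ (iteratedDerivWithin k f (Set.Ioo A B)) (Set.Ioo A B) x :=
    (hf.differentiableOn_iteratedDerivWithin (by exact_mod_cast hk) hu) x hx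
  have h2 : iteratedDerivWithin (k+1) f (Set.Ioo A B) x
      = derivWithin (iteratedDerivWithin k f (Set.Ioo A B)) (Set.Ioo A B) x :=
    by rw [iteratedDerivWithin_succ]
  rw [h2]
  exact hd.hasDerivWithinAt.hasDerivAt (isOpen_Ioo.mem_nhds hx)

lemma contOn_iter (hf : ContDiffOn ℝ n f (Set.Ioo A B)) {k : ℕ} (hk : k ≤ n) :
    ContinuousOn (iteratedDerivWithin k f (Set.Ioo A B)) (Set.Ioo A B) :=
  hf.continuousOn_iteratedDerivWithin (by exact_mod_cast hk) isOpen_Ioo.uniqueDiffOn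

lemma intInt (hf : ContDiffOn ℝ n f (Set.Ioo A B)) {k j : ℕ} (hj : j ≤ n) {a b c : ℝ}
    (ha : a ∈ Set.Ioo A B) (hb : b ∈ Set.Ioo A B) :
    IntervalIntegrable (fun s => (c - s)^k * iteratedDerivWithin j f (Set.Ioo A B) s)
      volume a b := by
  apply ContinuousOn.intervalIntegrable
  apply ContinuousOn.mul _ ((contOn_iter hf hj).mono (uIcc_subset_Ioo ha hb))
  exact ((continuousOn_const.sub continuousOn_id).pow k)

/-- Taylor's theorem with integral remainder on an open interval. -/
lemma taylor_int (hf : ContDiffOn ℝ n f (Set.Ioo A B)) {a b : ℝ}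
    (ha : a ∈ Set.Ioo A B) (hb : b ∈ Set.Ioo A B) :
    ∀ i : ℕ, i + 1 ≤ n →
      f b = (∑ k ∈ Finset.range (i+1),
          iteratedDerivWithin k f (Set.Ioo A B) a * (b-a)^k / (k.factorial : ℝ))
        + (1/(i.factorial : ℝ)) *
            ∫ s in a..b, (b-s)^i * iteratedDerivWithin (i+1) f (Set.Ioo A B) s := by
  intro i
  induction i with
  | zero =>
    intro h1
    have hftc : ∫ s in a..b, iteratedDerivWithin 1 f (Set.Ioo A B) s = f b - f a := by
      apply intervalIntegral.integral_eq_sub_of_hasDerivAt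
      · intro x hx
        have h := hasDerivAt_iter hf (k := 0) (by omega) (uIcc_subset_Ioo ha hb hx)
        rwa [iteratedDerivWithin_zero] at h
      · have h := intInt hf h1 (k := 0) (c := b) ha hb
        simpa using h
    simp only [zero_add, Finset.range_one, Finset.sum_singleton, iteratedDerivWithin_zero]
    simp only [pow_zero, Nat.factorial_zero, Nat.cast_one, mul_one, div_one, one_mul]
    rw [hftc]; ring
  | succ i IHi =>
    intro hi2
    have hi1 : i + 1 ≤ n := by omega
    have prev := IHi hi1
    have hfact : ((i+1).factorial : ℝ) = (i+1) * (i.factorial : ℝ) := by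
      rw [Nat.factorial_succ]; push_cast; ring
    have hfacne : (i.factorial : ℝ) ≠ 0 := Nat.cast_ne_zero.2 (Nat.factorial_ne_zero i)
    have hfacne1 : ((i+1).factorial : ℝ) ≠ 0 := Nat.cast_ne_zero.2 (Nat.factorial_ne_zero _)
    have hderivF : ∀ x ∈ Set.uIcc a b,
        HasDerivAt (fun u => (-(1/(((i+1).factorial : ℝ)))) * (b-u)^(i+1)
            * iteratedDerivWithin (i+1) f (Set.Ioo A B) u)
          ((1/(i.factorial : ℝ)) * ((b-x)^i * iteratedDerivWithin (i+1) f (Set.Ioo A B) x)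
            - (1/((i+1).factorial : ℝ)) * ((b-x)^(i+1)
                * iteratedDerivWithin (i+2) f (Set.Ioo A B) x)) x := by
      intro x hx
      have hxI : x ∈ Set.Ioo A B := uIcc_subset_Ioo ha hb hx
      have h1 : HasDerivAt (fun u : ℝ => (b-u)^(i+1))
          ((((i+1):ℕ) : ℝ) * (b-x)^(i+1-1) * (-1)) x :=
        (((hasDerivAt_id x).const_sub b)).pow (i+1)
      have h2 := ((h1.const_mul (-(1/(((i+1).factorial : ℝ))))).mul
        (hasDerivAt_iter hf (k := i+1) (by omega) hxI))
      have heq : (1/(i.factorial : ℝ)) * ((b-x)^i * iteratedDerivWithin (i+1) f (Set.Ioo A B) x)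
            - (1/((i+1).factorial : ℝ)) * ((b-x)^(i+1)
                * iteratedDerivWithin (i+2) f (Set.Ioo A B) x)
          = (-(1/(((i+1).factorial : ℝ)))) * ((((i+1):ℕ) : ℝ) * (b-x)^(i+1-1) * (-1))
              * iteratedDerivWithin (i+1) f (Set.Ioo A B) x
            + (-(1/(((i+1).factorial : ℝ)))) * (b-x)^(i+1)
              * iteratedDerivWithin (i+1+1) f (Set.Ioo A B) x := by
        simp only [Nat.add_sub_cancel]
        rw [hfact]
        push_cast
        field_simp
        ring
      rw [heq]
      exact h2
    have hGint : IntervalIntegrable (fun x =>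
        (1/(i.factorial : ℝ)) * ((b-x)^i * iteratedDerivWithin (i+1) f (Set.Ioo A B) x)
          - (1/((i+1).factorial : ℝ)) * ((b-x)^(i+1)
              * iteratedDerivWithin (i+2) f (Set.Ioo A B) x)) volume a b := by
      apply IntervalIntegrable.sub
      · exact (intInt hf hi1 (k := i) (c := b) ha hb).const_mul _
      · exact (intInt hf hi2 (k := i+1) (c := b) ha hb).const_mul _
    have hftc := intervalIntegral.integral_eq_sub_of_hasDerivAt hderivF hGint
    rw [intervalIntegral.integral_sub
        ((intInt hf hi1 (k := i) (c := b) ha hb).const_mul _)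
        ((intInt hf hi2 (k := i+1) (c := b) ha hb).const_mul _),
      intervalIntegral.integral_const_mul, intervalIntegral.integral_const_mul] at hftc
    have hb0 : (b - b)^(i+1) = 0 := by
      rw [sub_self]; exact zero_pow (by omega)
    rw [hb0] at hftc
    have key : (1/(i.factorial : ℝ))
          * (∫ s in a..b, (b-s)^i * iteratedDerivWithin (i+1) f (Set.Ioo A B) s)
        = iteratedDerivWithin (i+1) f (Set.Ioo A B) a * (b-a)^(i+1) / (((i+1).factorial : ℝ))
          + (1/((i+1).factorial : ℝ))
            * (∫ s in a..b, (b-s)^(i+1) * iteratedDerivWithin (i+2) f (Set.Ioo A B) s) := by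
      have e2 : iteratedDerivWithin (i+1) f (Set.Ioo A B) a * (b-a)^(i+1)
          / (((i+1).factorial : ℝ))
          = (-(1/(((i+1).factorial : ℝ)))) * 0 * iteratedDerivWithin (i+1) f (Set.Ioo A B) b
            - (-(1/(((i+1).factorial : ℝ)))) * (b-a)^(i+1)
              * iteratedDerivWithin (i+1) f (Set.Ioo A B) a := by
        field_simp
        ring
      rw [e2, ← hftc]
      ring
    rw [prev, key]
    conv_rhs => rw [Finset.sum_range_succ]
    simp only [show i+1+1 = i+2 from rfl]
    ring

end Taylor

lemma tp_eq_indicator (k : ℕ) (c : ℝ) :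
    tp k c = Set.indicator (Set.Iic c) (fun s => (c - s)^k) := by
  funext s
  simp [tp, Set.indicator_apply, Set.mem_Iic]

lemma tp_integrableOn (k : ℕ) (c a b : ℝ) : IntegrableOn (tp k c) (Set.Icc a b) volume := by
  rw [tp_eq_indicator]
  exact (Continuous.integrableOn_Icc (by continuity)).indicator measurableSet_Iic

lemma vand_ne_zero {k : ℕ} {u : Fin k → ℝ} (hu : StrictMono u) : vand u ≠ 0 := by
  rw [vand]
  apply Finset.prod_ne_zero_iff.2
  intro p hp
  simp only [Finset.mem_filter] at hp
  exact sub_ne_zero.2 (hu hp.2).ne'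

lemma tp_interval_integral {m : ℕ} {a0 aN c : ℝ} (h1 : a0 ≤ c) (h2 : c ≤ aN) :
    ∫ s in a0..aN, tp m c s = (c - a0)^(m+1) / (m+1) := by
  have hint1 : IntervalIntegrable (tp m c) volume a0 c :=
    ((tp_integrableOn m c a0 aN).mono_set (show Set.uIcc a0 c ⊆ Set.Icc a0 aN by
      rw [Set.uIcc_of_le h1]; exact Set.Icc_subset_Icc le_rfl h2)).intervalIntegrable
  have hint2 : IntervalIntegrable (tp m c) volume c aN :=
    ((tp_integrableOn m c a0 aN).mono_set (show Set.uIcc c aN ⊆ Set.Icc a0 aN by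
      rw [Set.uIcc_of_le h2]; exact Set.Icc_subset_Icc h1 le_rfl)).intervalIntegrable
  rw [← intervalIntegral.integral_add_adjacent_intervals hint1 hint2]
  have e2 : ∫ s in c..aN, tp m c s = 0 := by
    rw [intervalIntegral.integral_of_le h2]
    apply MeasureTheory.setIntegral_eq_zero_of_forall_eq_zero
    intro x hx
    exact tp_of_lt m hx.1
  have e1 : ∫ s in a0..c, tp m c s = ∫ s in a0..c, (c - s)^m := by
    apply intervalIntegral.integral_congr
    intro x hx
    rw [Set.uIcc_of_le h1] at hx
    exact tp_of_le m hx.2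
  rw [e1, e2, add_zero, intervalIntegral.integral_comp_sub_left (fun x => x^m) c, sub_self,
    integral_pow]
  rw [zero_pow (by omega), sub_zero]

set_option maxHeartbeats 2000000 in
/-- given `t_1 < ⋯ < t_{n+1}` in an interval `I`, there is a nonnegative
`ψ` supported on `[t_1, t_{n+1}]` with total integral one such that for every
`f ∈ C^n(I)` the divided-difference combination
`∑ (-1)^{n+1-i} f(t_i) V_n(t_1,…,t̂_i,…,t_{n+1}) / V_{n+1}(t)` equals
`(1/n!) ∫ f^{(n)}(s) ψ(s) ds`. -/
theorem statement1 (n : ℕ) (hn : 0 < n) (A B : ℝ) (t : Fin (n + 1) → ℝ)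
    (ht : StrictMono t) (htI : ∀ i, t i ∈ Set.Ioo A B) :
    ∃ ψ : ℝ → ℝ, (∀ s, 0 ≤ ψ s) ∧
      (∀ s ∉ Set.Icc (t 0) (t (Fin.last n)), ψ s = 0) ∧
      (∫ s, ψ s) = 1 ∧
      ∀ f : ℝ → ℝ, ContDiffOn ℝ n f (Set.Ioo A B) →
        ∑ i : Fin (n + 1), (-1 : ℝ) ^ (n - (i : ℕ)) * f (t i) * vandOmit t i / vand t
          = (1 / (n.factorial : ℝ)) *
              ∫ s, iteratedDerivWithin n f (Set.Ioo A B) s * ψ s := by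
  obtain ⟨m, rfl⟩ : ∃ m, n = m + 1 := ⟨n - 1, by omega⟩
  have htinj : Function.Injective t := ht.injective
  have h0N : t 0 ≤ t (Fin.last (m+1)) := ht.monotone (Fin.zero_le _)
  have hIccIoo : Set.Icc (t 0) (t (Fin.last (m+1))) ⊆ Set.Ioo A B :=
    Set.ordConnected_Ioo.out (htI 0) (htI _)
  have huIcc : Set.uIcc (t 0) (t (Fin.last (m+1))) = Set.Icc (t 0) (t (Fin.last (m+1))) :=
    Set.uIcc_of_le h0N
  have hti : ∀ i, t 0 ≤ t i ∧ t i ≤ t (Fin.last (m+1)) :=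
    fun i => ⟨ht.monotone (Fin.zero_le i), ht.monotone (Fin.le_last i)⟩
  set Q : ℝ → ℝ := fun s => ∑ i, tp m (t i) s / W t i with hQdef
  -- support of Q
  have hQ0 : ∀ s ∉ Set.Icc (t 0) (t (Fin.last (m+1))), Q s = 0 := by
    intro s hs
    rw [Set.mem_Icc, not_and_or] at hs
    rcases hs with hs | hs
    · push_neg at hs
      rw [hQdef]
      simp only
      rw [ddTP ht (by omega) hs.le]
      exact if_neg (by omega)
    · push_neg at hs
      apply Finset.sum_eq_zero; intro i _
      rw [tp_of_lt m (lt_of_le_of_lt (ht.monotone (Fin.le_last i)) hs), zero_div]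
  -- integrability of Q
  have hQint : IntegrableOn Q (Set.Icc (t 0) (t (Fin.last (m+1)))) volume :=
    integrable_finset_sum _ (fun i _ => (tp_integrableOn m (t i) _ _).div_const _)
  have hQii : ∀ i : Fin (m+2),
      IntervalIntegrable (fun s => tp m (t i) s / W t i) volume (t 0) (t (Fin.last (m+1))) := by
    intro i
    apply IntegrableOn.intervalIntegrable
    rw [huIcc]
    exact (tp_integrableOn m (t i) _ _).div_const _
  -- integral over ℝ reduces to interval integral for functions supported in Icc
  have hconv : ∀ g : ℝ → ℝ, (∀ s ∉ Set.Icc (t 0) (t (Fin.last (m+1))), g s = 0) →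
      ∫ s, g s = ∫ s in (t 0)..(t (Fin.last (m+1))), g s := by
    intro g hg
    have : g = Set.indicator (Set.Icc (t 0) (t (Fin.last (m+1)))) g := by
      funext s
      rw [Set.indicator_apply]
      split
      · rfl
      · exact hg s ‹_›
    conv_lhs => rw [this]
    rw [MeasureTheory.integral_indicator measurableSet_Icc,
      MeasureTheory.integral_Icc_eq_integral_Ioc, ← intervalIntegral.integral_of_le h0N]
  refine ⟨fun s => ((m+1 : ℕ) : ℝ) * Q s, ?_, ?_, ?_, ?_⟩
  · intro s
    exact mul_nonneg (by positivity) (Bnonneg m t ht s)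
  · intro s hs
    simp only [hQ0 s hs, mul_zero]
  · -- total integral one
    rw [hconv _ (fun s hs => by simp only [hQ0 s hs, mul_zero]),
      intervalIntegral.integral_const_mul]
    have hQval : (∫ s in (t 0)..(t (Fin.last (m+1))), Q s)
        = ∑ i : Fin (m+2), ((t i - t 0)^(m+1) / (m+1)) / W t i := by
      rw [hQdef]
      simp only
      rw [intervalIntegral.integral_finset_sum (fun i _ => hQii i)]
      apply Finset.sum_congr rfl
      intro i _
      rw [intervalIntegral.integral_div, tp_interval_integral (hti i).1 (hti i).2]
    rw [hQval, Finset.mul_sum]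
    have : ∀ i : Fin (m+2), ((m+1 : ℕ) : ℝ) * (((t i - t 0)^(m+1) / (m+1)) / W t i)
        = tp (m+1) (t i) (t 0) / W t i := by
      intro i
      rw [tp_of_le (m+1) (hti i).1]
      have hmne : ((m:ℝ)+1) ≠ 0 := by positivity
      have hW := W_ne_zero htinj i
      push_cast
      field_simp
    rw [Finset.sum_congr rfl (fun i _ => this i), ddTP ht le_rfl le_rfl, if_pos rfl]
  · -- main identity
    intro f hf
    have hA : ∀ i : Fin (m+2),
        (-1 : ℝ) ^ (m + 1 - (i : ℕ)) * f (t i) * vandOmit t i / vand t = f (t i) / W t i := by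
      intro i
      rw [vand_split t i]
      have hv : vandOmit t i ≠ 0 := vand_ne_zero (ht.comp (Fin.strictMono_succAbove i))
      have hW : W t i ≠ 0 := W_ne_zero htinj i
      have ha : ((-1:ℝ))^(m + 1 - (i:ℕ)) ≠ 0 := pow_ne_zero _ (by norm_num)
      field_simp
    -- continuity and boundedness of the top derivative
    have hDcont : ContinuousOn (iteratedDerivWithin (m+1) f (Set.Ioo A B))
        (Set.Icc (t 0) (t (Fin.last (m+1)))) := (contOn_iter hf le_rfl).mono hIccIoo
    obtain ⟨C, hC⟩ := (isCompact_Icc).exists_bound_of_continuousOn hDcont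
    have hDaem : AEStronglyMeasurable (iteratedDerivWithin (m+1) f (Set.Ioo A B))
        (volume.restrict (Set.Icc (t 0) (t (Fin.last (m+1))))) :=
      hDcont.aestronglyMeasurable measurableSet_Icc
    have hmul : ∀ i : Fin (m+2), IntegrableOn
        (fun s => iteratedDerivWithin (m+1) f (Set.Ioo A B) s * (tp m (t i) s / W t i))
        (Set.Icc (t 0) (t (Fin.last (m+1)))) volume := fun i =>
      ((tp_integrableOn m (t i) _ _).div_const _).bdd_mul hDaem
        ((ae_restrict_iff' measurableSet_Icc).2 (Filter.Eventually.of_forall hC))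
    have hmulii : ∀ i : Fin (m+2), IntervalIntegrable
        (fun s => iteratedDerivWithin (m+1) f (Set.Ioo A B) s * (tp m (t i) s / W t i))
        volume (t 0) (t (Fin.last (m+1))) := by
      intro i
      apply IntegrableOn.intervalIntegrable
      rw [huIcc]
      exact hmul i
    -- Taylor at each node
    have htay : ∀ i : Fin (m+2), f (t i)
        = (∑ k ∈ Finset.range (m+1),
            iteratedDerivWithin k f (Set.Ioo A B) (t 0) * (t i - t 0)^k / (k.factorial : ℝ))
          + (1/(m.factorial : ℝ)) *
              ∫ s in (t 0)..(t i), (t i - s)^m * iteratedDerivWithin (m+1) f (Set.Ioo A B) s :=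
      fun i => taylor_int hf (htI 0) (htI i) m le_rfl
    -- the polynomial part annihilates
    have hpoly : ∑ i : Fin (m+2), (∑ k ∈ Finset.range (m+1),
          iteratedDerivWithin k f (Set.Ioo A B) (t 0) * (t i - t 0)^k / (k.factorial : ℝ))
          / W t i = 0 := by
      have e : ∀ i : Fin (m+2), (∑ k ∈ Finset.range (m+1),
          iteratedDerivWithin k f (Set.Ioo A B) (t 0) * (t i - t 0)^k / (k.factorial : ℝ))
          / W t i
          = ∑ k ∈ Finset.range (m+1),
            (iteratedDerivWithin k f (Set.Ioo A B) (t 0) / (k.factorial : ℝ))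
              * (tp k (t i) (t 0) / W t i) := by
        intro i
        rw [Finset.sum_div]
        apply Finset.sum_congr rfl
        intro k _
        rw [tp_of_le k (hti i).1]
        ring
      rw [Finset.sum_congr rfl (fun i _ => e i), Finset.sum_comm]
      apply Finset.sum_eq_zero
      intro k hk
      rw [Finset.mem_range] at hk
      rw [← Finset.mul_sum, ddTP ht (by omega : k ≤ m + 1) le_rfl,
        if_neg (by omega), mul_zero]
    -- remainder integrals over the common interval
    have hrem : ∀ i : Fin (m+2),
        (∫ s in (t 0)..(t (Fin.last (m+1))),
            iteratedDerivWithin (m+1) f (Set.Ioo A B) s * (tp m (t i) s / W t i))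
          = (∫ s in (t 0)..(t i),
              (t i - s)^m * iteratedDerivWithin (m+1) f (Set.Ioo A B) s) / W t i := by
      intro i
      have hi1 := (hti i).1
      have hi2 := (hti i).2
      have hsub1 : Set.uIcc (t 0) (t i) ⊆ Set.Icc (t 0) (t (Fin.last (m+1))) := by
        rw [Set.uIcc_of_le hi1]; exact Set.Icc_subset_Icc le_rfl hi2
      have hsub2 : Set.uIcc (t i) (t (Fin.last (m+1))) ⊆ Set.Icc (t 0) (t (Fin.last (m+1))) := by
        rw [Set.uIcc_of_le hi2]; exact Set.Icc_subset_Icc hi1 le_rfl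
      have h1 : IntervalIntegrable
          (fun s => iteratedDerivWithin (m+1) f (Set.Ioo A B) s * (tp m (t i) s / W t i))
          volume (t 0) (t i) := ((hmul i).mono_set hsub1).intervalIntegrable
      have h2 : IntervalIntegrable
          (fun s => iteratedDerivWithin (m+1) f (Set.Ioo A B) s * (tp m (t i) s / W t i))
          volume (t i) (t (Fin.last (m+1))) := ((hmul i).mono_set hsub2).intervalIntegrable
      rw [← intervalIntegral.integral_add_adjacent_intervals h1 h2]
      have e2 : (∫ s in (t i)..(t (Fin.last (m+1))),
          iteratedDerivWithin (m+1) f (Set.Ioo A B) s * (tp m (t i) s / W t i)) = 0 := by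
        rw [intervalIntegral.integral_of_le hi2]
        apply MeasureTheory.setIntegral_eq_zero_of_forall_eq_zero
        intro x hx
        simp only [tp_of_lt m hx.1, zero_div, mul_zero]
      have e1 : (∫ s in (t 0)..(t i),
          iteratedDerivWithin (m+1) f (Set.Ioo A B) s * (tp m (t i) s / W t i))
          = ∫ s in (t 0)..(t i),
              ((t i - s)^m * iteratedDerivWithin (m+1) f (Set.Ioo A B) s) / W t i := by
        apply intervalIntegral.integral_congr
        intro x hx
        rw [Set.uIcc_of_le hi1] at hx
        simp only [tp_of_le m hx.2]
        ring
      rw [e1, e2, add_zero, intervalIntegral.integral_div]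
    -- assemble
    rw [Finset.sum_congr rfl (fun i _ => hA i)]
    have hsplitf : ∀ i : Fin (m+2), f (t i) / W t i
        = (∑ k ∈ Finset.range (m+1),
            iteratedDerivWithin k f (Set.Ioo A B) (t 0) * (t i - t 0)^k / (k.factorial : ℝ))
            / W t i
          + (1/(m.factorial : ℝ)) *
              (∫ s in (t 0)..(t (Fin.last (m+1))),
                iteratedDerivWithin (m+1) f (Set.Ioo A B) s * (tp m (t i) s / W t i)) := by
      intro i
      rw [hrem i]
      conv_lhs => rw [htay i]
      rw [add_div, mul_div_assoc]
    rw [Finset.sum_congr rfl (fun i _ => hsplitf i), Finset.sum_add_distrib, hpoly, zero_add,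
      ← Finset.mul_sum,
      ← intervalIntegral.integral_finset_sum (fun i (_ : i ∈ Finset.univ) => hmulii i)]
    have hQmul : (∫ s in (t 0)..(t (Fin.last (m+1))),
        ∑ i : Fin (m+2), iteratedDerivWithin (m+1) f (Set.Ioo A B) s * (tp m (t i) s / W t i))
        = ∫ s in (t 0)..(t (Fin.last (m+1))),
            iteratedDerivWithin (m+1) f (Set.Ioo A B) s * Q s := by
      apply intervalIntegral.integral_congr
      intro x _
      simp only [hQdef]
      rw [Finset.mul_sum]
    rw [hQmul]
    have hR : (∫ s, iteratedDerivWithin (m+1) f (Set.Ioo A B) s * (((m+1 : ℕ) : ℝ) * Q s))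
        = ((m+1 : ℕ) : ℝ) * ∫ s in (t 0)..(t (Fin.last (m+1))),
            iteratedDerivWithin (m+1) f (Set.Ioo A B) s * Q s := by
      rw [hconv _ (fun s hs => by simp only [hQ0 s hs, mul_zero]),
        ← intervalIntegral.integral_const_mul]
      apply intervalIntegral.integral_congr
      intro x _
      ring
    show (1/(m.factorial : ℝ)) * (∫ s in (t 0)..(t (Fin.last (m+1))),
        iteratedDerivWithin (m+1) f (Set.Ioo A B) s * Q s)
      = (1 / ((m+1).factorial : ℝ)) *
          ∫ s, iteratedDerivWithin (m+1) f (Set.Ioo A B) s * (((m+1 : ℕ) : ℝ) * Q s)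
    rw [hR]
    have hfact : ((m+1).factorial : ℝ) = (m+1) * (m.factorial : ℝ) := by
      rw [Nat.factorial_succ]; push_cast; ring
    have hfacne : (m.factorial : ℝ) ≠ 0 := Nat.cast_ne_zero.2 (Nat.factorial_ne_zero m)
    rw [hfact]
    push_cast
    have hmne : ((m:ℝ)+1) ≠ 0 := by positivity
    field_simp

end
end

section
/- Let t_1 < ⋯ < t_{n+1} be distinct real points. The function ψ(s) := ∑_{i : t_i > s} n(t_i − s)^{n−1} / ∏_{j ≠ i}(t_i − t_j) is nonnegative everywhere. -/
open Finset

/-- Divided-difference style functional: `∑_{x∈S} g x / ∏_{y∈S, y≠x} (x-y)`. -/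
noncomputable def Ldd (S : Finset ℝ) (g : ℝ → ℝ) : ℝ :=
  ∑ x ∈ S, g x / ∏ y ∈ S.erase x, (x - y)

lemma Ldd_congr (S : Finset ℝ) {f g : ℝ → ℝ} (h : ∀ x ∈ S, f x = g x) :
    Ldd S f = Ldd S g := by
  unfold Ldd
  exact Finset.sum_congr rfl fun x hx => by rw [h x hx]

lemma Ldd_add (S : Finset ℝ) (f g : ℝ → ℝ) :
    Ldd S (fun x => f x + g x) = Ldd S f + Ldd S g := by
  unfold Ldd
  rw [← Finset.sum_add_distrib]
  exact Finset.sum_congr rfl fun x hx => by ring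

lemma Ldd_smul (S : Finset ℝ) (c : ℝ) (f : ℝ → ℝ) :
    Ldd S (fun x => c * f x) = c * Ldd S f := by
  unfold Ldd
  rw [Finset.mul_sum]
  exact Finset.sum_congr rfl fun x hx => by ring

lemma Ldd_zero (S : Finset ℝ) : Ldd S (fun _ => 0) = 0 := by
  unfold Ldd; simp

/-- Key cancellation lemma: `L S ((·-a)·h) = L (S\{a}) h` for `a ∈ S`. -/
lemma Ldd_erase (S : Finset ℝ) {a : ℝ} (ha : a ∈ S) (h : ℝ → ℝ) :
    Ldd S (fun x => (x - a) * h x) = Ldd (S.erase a) h := by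
  unfold Ldd
  rw [← Finset.add_sum_erase _ _ ha]
  simp only [sub_self, zero_mul, zero_div, zero_add]
  refine Finset.sum_congr rfl fun x hx => ?_
  have hxa : x ≠ a := (Finset.mem_erase.mp hx).1
  have haS : a ∈ S.erase x := Finset.mem_erase.mpr ⟨hxa.symm, ha⟩
  rw [← Finset.mul_prod_erase _ _ haS, Finset.erase_right_comm, mul_comm ((x:ℝ) - a)]
  rw [mul_div_assoc, div_mul_cancel_left₀ (sub_ne_zero.mpr hxa), div_eq_mul_inv]

lemma Ldd_sub (S : Finset ℝ) (f g : ℝ → ℝ) :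
    Ldd S (fun x => f x - g x) = Ldd S f - Ldd S g := by
  unfold Ldd
  rw [← Finset.sum_sub_distrib]
  exact Finset.sum_congr rfl fun x hx => by ring

lemma Ldd_one (n : ℕ) (S : Finset ℝ) (hc : S.card = n) :
    Ldd S (fun _ => 1) = if n = 1 then 1 else 0 := by
  induction n generalizing S with
  | zero =>
    rw [Finset.card_eq_zero] at hc
    subst hc; simp [Ldd]
  | succ n ih =>
    rcases Nat.eq_zero_or_pos n with hn | hn
    · subst hn
      obtain ⟨a, rfl⟩ := Finset.card_eq_one.mp hc
      simp [Ldd]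
    · have h2 : 1 < S.card := by omega
      obtain ⟨a, ha, b, hb, hab⟩ := Finset.one_lt_card.mp h2
      have e1 : Ldd S (fun x => (x - a) * 1) = Ldd (S.erase a) (fun _ => 1) :=
        Ldd_erase S ha _
      have e2 : Ldd S (fun x => (x - b) * 1) = Ldd (S.erase b) (fun _ => 1) :=
        Ldd_erase S hb _
      have ca : (S.erase a).card = n := by
        rw [Finset.card_erase_of_mem ha, hc]
        omega
      have cb : (S.erase b).card = n := by
        rw [Finset.card_erase_of_mem hb, hc]
        omega
      have key : (b - a) * Ldd S (fun _ => 1) =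
          Ldd S (fun x => (x - a) * 1) - Ldd S (fun x => (x - b) * 1) := by
        rw [← Ldd_sub, ← Ldd_smul]
        exact Ldd_congr S fun x _ => by ring
      rw [e1, e2, ih _ ca, ih _ cb, sub_self] at key
      have hba : b - a ≠ 0 := sub_ne_zero.mpr hab.symm
      have : Ldd S (fun _ => 1) = 0 :=
        (mul_eq_zero.mp key).resolve_left hba
      rw [this]
      have hn1 : n + 1 ≠ 1 := by omega
      rw [if_neg hn1]

lemma Ldd_pow (k : ℕ) : ∀ (S : Finset ℝ) (s : ℝ), k + 2 ≤ S.card →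
    Ldd S (fun x => (x - s) ^ k) = 0 := by
  induction k with
  | zero =>
    intro S s h
    simp only [pow_zero]
    rw [Ldd_one S.card S rfl]
    have h1 : S.card ≠ 1 := by omega
    rw [if_neg h1]
  | succ k ih =>
    intro S s h
    have hne : S.Nonempty := Finset.card_pos.mp (by omega)
    obtain ⟨a, ha⟩ := hne
    have e0 : Ldd S (fun x => (x - s) ^ (k + 1)) =
        Ldd S (fun x => (x - a) * (x - s) ^ k) + (a - s) * Ldd S (fun x => (x - s) ^ k) := by
      rw [← Ldd_smul, ← Ldd_add]
      exact Ldd_congr S fun x _ => by ring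
    rw [e0, Ldd_erase S ha]
    rw [ih (S.erase a) s (by rw [Finset.card_erase_of_mem ha]; omega), ih S s (by omega)]
    ring

lemma base_pair (a b s : ℝ) (h : a < b) :
    0 ≤ (if s < a then (a - s) ^ 0 else 0) / (a - b) +
        (if s < b then (b - s) ^ 0 else 0) / (b - a) := by
  have hba : (0:ℝ) < b - a := sub_pos.mpr h
  by_cases h1 : s < a
  · have h2 : s < b := h1.trans h
    rw [if_pos h1, if_pos h2]
    have hne1 : a - b ≠ 0 := by linarith
    have hne2 : b - a ≠ 0 := by linarith
    have : (a - s) ^ 0 / (a - b) + (b - s) ^ 0 / (b - a) = 0 := by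
      field_simp
      ring
    rw [this]
  · by_cases h2 : s < b
    · rw [if_neg h1, if_pos h2, zero_div, pow_zero]
      positivity
    · rw [if_neg h1, if_neg h2]
      simp

lemma key_nonneg : ∀ (n : ℕ), 1 ≤ n → ∀ (S : Finset ℝ), S.card = n + 1 → ∀ s : ℝ,
    0 ≤ Ldd S (fun x => if s < x then (x - s) ^ (n - 1) else 0) := by
  intro n hn
  induction n, hn using Nat.le_induction with
  | base =>
    intro S hc s
    obtain ⟨a, b, hab, rfl⟩ := Finset.card_eq_two.mp hc
    have expand : Ldd {a, b} (fun x => if s < x then (x - s) ^ (1 - 1) else 0) =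
        (if s < a then (a - s) ^ 0 else 0) / (a - b) +
        (if s < b then (b - s) ^ 0 else 0) / (b - a) := by
      have hba : b ≠ a := hab.symm
      simp [Ldd, Finset.sum_pair hab, Finset.erase_insert_of_ne hab,
        Finset.erase_insert, hab, hba]
    rw [expand]
    rcases hab.lt_or_gt with h | h
    · exact base_pair a b s h
    · have := base_pair b a s h
      linarith
  | succ n hn ih =>
    intro S hc s
    simp only [Nat.add_sub_cancel]
    have hne : S.Nonempty := Finset.card_pos.mp (by omega)
    set a := S.min' hne with ha_def
    set b := S.max' hne with hb_def
    have haS : a ∈ S := S.min'_mem hne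
    have hbS : b ∈ S := S.max'_mem hne
    have hab : a < b := S.min'_lt_max'_of_card (by omega)
    set h : ℝ → ℝ := fun x => if s < x then (x - s) ^ (n - 1) else 0 with hh
    have hg : ∀ x : ℝ, (if s < x then (x - s) ^ n else 0) = (x - s) * h x := by
      intro x
      by_cases hx : s < x
      · rw [hh]; simp only [if_pos hx]
        rw [← pow_succ']
        congr 1
        omega
      · rw [hh]; simp only [if_neg hx, mul_zero]
    by_cases hs1 : s < a
    · -- all points to the right of s: divided difference of a polynomial, vanishes
      have : Ldd S (fun x => if s < x then (x - s) ^ n else 0) =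
          Ldd S (fun x => (x - s) ^ n) := by
        refine Ldd_congr S fun x hx => ?_
        rw [if_pos (hs1.trans_le (S.min'_le x hx))]
      rw [this, Ldd_pow n S s (by omega)]
    · by_cases hs2 : s < b
      · -- a ≤ s < b : Cox-de Boor style recurrence
        have e1 : Ldd S (fun x => (x - s) * h x) =
            Ldd (S.erase a) h + (a - s) * Ldd S h := by
          rw [← Ldd_erase S haS h, ← Ldd_smul, ← Ldd_add]
          exact Ldd_congr S fun x _ => by ring
        have e2 : Ldd S (fun x => (x - s) * h x) =
            Ldd (S.erase b) h + (b - s) * Ldd S h := by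
          rw [← Ldd_erase S hbS h, ← Ldd_smul, ← Ldd_add]
          exact Ldd_congr S fun x _ => by ring
        have h1 : 0 ≤ Ldd (S.erase a) h := by
          apply ih (S.erase a) _ s
          rw [Finset.card_erase_of_mem haS, hc]
          omega
        have h2 : 0 ≤ Ldd (S.erase b) h := by
          apply ih (S.erase b) _ s
          rw [Finset.card_erase_of_mem hbS, hc]
          omega
        have hkey : (b - a) * Ldd S (fun x => (x - s) * h x) =
            (b - s) * Ldd (S.erase a) h + (s - a) * Ldd (S.erase b) h := by
          linear_combination (b - s) * e1 - (a - s) * e2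
        have hG : Ldd S (fun x => if s < x then (x - s) ^ n else 0) =
            Ldd S (fun x => (x - s) * h x) := Ldd_congr S fun x _ => hg x
        rw [hG]
        have hba : (0:ℝ) < b - a := sub_pos.mpr hab
        have hbs : (0:ℝ) ≤ b - s := by linarith
        have hsa : (0:ℝ) ≤ s - a := by linarith
        have hpos : 0 ≤ (b - a) * Ldd S (fun x => (x - s) * h x) := by
          rw [hkey]
          exact add_nonneg (mul_nonneg hbs h1) (mul_nonneg hsa h2)
        exact (mul_nonneg_iff_of_pos_left hba).mp hpos
      · -- s to the right of all points: everything vanishes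
        have : Ldd S (fun x => if s < x then (x - s) ^ n else 0) =
            Ldd S (fun _ => 0) := by
          refine Ldd_congr S fun x hx => ?_
          rw [if_neg]
          intro hsx
          exact hs2 (hsx.trans_le (S.le_max' x hx))
        rw [this, Ldd_zero]

/-- The explicit kernel `ψ(s) = ∑_{i : t_i > s} n (t_i - s)^{n-1} / ∏_{j ≠ i} (t_i - t_j)`. -/
noncomputable def psiKer (n : ℕ) (t : Fin (n + 1) → ℝ) (s : ℝ) : ℝ :=
  ∑ i : Fin (n + 1),
    if s < t i then (n : ℝ) * (t i - s) ^ (n - 1) / ∏ j ∈ Finset.univ.erase i, (t i - t j)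
    else 0

/-- for distinct increasing `t_1, …, t_{n+1}` the kernel `ψ` is
nonnegative everywhere. -/
theorem statement3 (n : ℕ) (hn : 0 < n) (t : Fin (n + 1) → ℝ) (ht : StrictMono t) :
    ∀ s : ℝ, 0 ≤ psiKer n t s := by
  intro s
  have hinj : Function.Injective t := ht.injective
  set S : Finset ℝ := Finset.image t Finset.univ with hS
  have hcard : S.card = n + 1 := by
    rw [hS, Finset.card_image_of_injective _ hinj, Finset.card_univ, Fintype.card_fin]
  have hrepr : psiKer n t s =
      (n : ℝ) * Ldd S (fun x => if s < x then (x - s) ^ (n - 1) else 0) := by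
    unfold psiKer Ldd
    rw [Finset.mul_sum, hS, Finset.sum_image (fun x _ y _ hxy => hinj hxy)]
    refine Finset.sum_congr rfl fun i _ => ?_
    have hprod : ∏ y ∈ (Finset.image t Finset.univ).erase (t i), (t i - y) =
        ∏ j ∈ Finset.univ.erase i, (t i - t j) := by
      rw [← Finset.image_erase hinj, Finset.prod_image
        (fun x _ y _ hxy => hinj hxy)]
    rw [hprod]
    by_cases hsi : s < t i
    · simp only [if_pos hsi, mul_div_assoc]
    · simp only [if_neg hsi, zero_div, mul_zero]
  rw [hrepr]
  exact mul_nonneg (Nat.cast_nonneg n) (key_nonneg n hn S hcard s)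
end

section
/- Let μ be a regular Borel probability measure on an interval I and n a positive integer. Define ℓ_n(μ)^n := (∫ |V_{n+1}(t_1,…,t_{n+1})| dμ^{n+1}) / (∫ |V_n(t_1,…,t_n)| dμ^n). Then ℓ_n(μ) = 0 if and only if μ is supported on a set of at most n points. -/
open MeasureTheory

lemma vand_continuous {m : ℕ} : Continuous (vand (m := m)) := by
  unfold vand
  exact continuous_finset_prod _ fun p _ =>
    ((continuous_apply p.2).sub (continuous_apply p.1))

lemma vand_eq_zero {m : ℕ} {t : Fin m → ℝ} {i j : Fin m} (hij : i ≠ j)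
    (h : t i = t j) : vand t = 0 := by
  rcases lt_or_gt_of_ne hij with hlt | hlt
  · exact Finset.prod_eq_zero (Finset.mem_filter.2 ⟨Finset.mem_univ (i, j), hlt⟩)
      (by simp [h])
  · exact Finset.prod_eq_zero (Finset.mem_filter.2 ⟨Finset.mem_univ (j, i), hlt⟩)
      (by simp [h])

/-- for a Borel probability measure `μ`, the quantity
`ℓ_n(μ)` vanishes (equivalently `∫ |V_{n+1}| dμ^{n+1} = 0`) if and only if `μ` is
supported on a set of at most `n` points. -/
theorem statement7 (n : ℕ) (hn : 0 < n) (μ : Measure ℝ) [IsProbabilityMeasure μ] :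
    (∫⁻ t : Fin (n + 1) → ℝ, ENNReal.ofReal |vand t| ∂(Measure.pi fun _ => μ)) = 0 ↔
      ∃ S : Finset ℝ, S.card ≤ n ∧ μ (↑S)ᶜ = 0 := by
  set π : Measure (Fin (n + 1) → ℝ) := Measure.pi fun _ => μ with hπ
  constructor
  · intro h0
    -- f is a.e. zero
    have hmeas : Measurable fun t : Fin (n + 1) → ℝ => ENNReal.ofReal |vand t| :=
      (ENNReal.measurable_ofReal.comp (vand_continuous.abs.measurable))
    have hae : ∀ᵐ t ∂π, ENNReal.ofReal |vand t| = 0 :=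
      (lintegral_eq_zero_iff hmeas).1 h0
    have hnull : π {t | vand t ≠ 0} = 0 := by
      have := hae
      rw [MeasureTheory.ae_iff] at this
      refine le_antisymm (le_trans (measure_mono ?_) this.le) zero_le
      intro t ht
      simp only [Set.mem_setOf_eq] at ht ⊢
      simp [ENNReal.ofReal_eq_zero, abs_nonpos_iff, ht]
    -- the "support" set
    set supp : Set ℝ := {x | ∀ U ∈ nhds x, μ U ≠ 0} with hsupp
    have hcompl : μ suppᶜ = 0 := by
      apply measure_null_of_locally_null
      intro x hx
      simp only [hsupp, Set.mem_compl_iff, Set.mem_setOf_eq, not_forall] at hx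
      obtain ⟨U, hU, hU0⟩ := hx
      push_neg at hU0
      exact ⟨suppᶜ ∩ U, inter_mem_nhdsWithin _ hU,
        measure_mono_null Set.inter_subset_right hU0⟩
    -- supp has at most n points
    have hcard : supp.encard ≤ n := by
      by_contra hbig
      push_neg at hbig
      have hle : (↑(n + 1) : ℕ∞) ≤ supp.encard := Order.add_one_le_of_lt hbig
      obtain ⟨T, hTs, hT⟩ := Set.exists_subset_encard_eq hle
      have hTfin : T.Finite := Set.finite_of_encard_eq_coe hT
      have hTcard : hTfin.toFinset.card = n + 1 := by
        rw [hTfin.encard_eq_coe_toFinset_card] at hT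
        exact_mod_cast hT
      let e := Finset.equivFinOfCardEq hTcard
      let x : Fin (n + 1) → ℝ := fun i => (e.symm i : ℝ)
      have hxinj : Function.Injective x := fun i j hij => by
        have := Subtype.coe_injective hij
        exact e.symm.injective this
      have hxsupp : ∀ i, x i ∈ supp := fun i =>
        hTs (hTfin.mem_toFinset.1 (e.symm i).2)
      -- pairwise distances
      have hne : (Finset.univ.offDiag : Finset (Fin (n+1) × Fin (n+1))).Nonempty := by
        refine ⟨(⟨0, by omega⟩, ⟨1, by omega⟩), Finset.mem_offDiag.2
          ⟨Finset.mem_univ _, Finset.mem_univ _, ?_⟩⟩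
        simp [Fin.ext_iff]
      set d : ℝ := Finset.inf' _ hne (fun p => |x p.1 - x p.2|) with hd
      have hdpos : 0 < d := by
        rw [hd, Finset.lt_inf'_iff]
        intro p hp
        have : p.1 ≠ p.2 := (Finset.mem_offDiag.1 hp).2.2
        have : x p.1 ≠ x p.2 := fun hc => this (hxinj hc)
        exact abs_pos.2 (sub_ne_zero.2 this)
      set ε : ℝ := d / 3 with hε
      have hεpos : 0 < ε := by positivity
      -- product of balls
      set B : Fin (n+1) → Set ℝ := fun i => Metric.ball (x i) ε with hB
      have hBpos : ∀ i, μ (B i) ≠ 0 := fun i =>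
        hxsupp i _ (Metric.ball_mem_nhds _ hεpos)
      have hTsub : Set.pi Set.univ B ⊆ {t | vand t ≠ 0} := by
        intro t ht
        simp only [Set.mem_setOf_eq]
        unfold vand
        rw [Finset.prod_ne_zero_iff]
        intro p hp
        have hplt := (Finset.mem_filter.1 hp).2
        have h1 : |t p.1 - x p.1| < ε := by
          have := ht p.1 (Set.mem_univ _)
          rwa [hB, Metric.mem_ball, Real.dist_eq] at this
        have h2 : |t p.2 - x p.2| < ε := by
          have := ht p.2 (Set.mem_univ _)
          rwa [hB, Metric.mem_ball, Real.dist_eq] at this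
        have hxd : d ≤ |x p.1 - x p.2| := by
          refine Finset.inf'_le _ (Finset.mem_offDiag.2 ⟨Finset.mem_univ _, Finset.mem_univ _, ?_⟩)
          exact ne_of_lt hplt
        intro hc
        rw [sub_eq_zero] at hc
        have : |x p.1 - x p.2| ≤ |t p.1 - x p.1| + |t p.2 - x p.2| := by
          have : x p.1 - x p.2 = (x p.1 - t p.1) + (t p.2 - x p.2) := by rw [hc]; ring
          calc |x p.1 - x p.2| ≤ |x p.1 - t p.1| + |t p.2 - x p.2| := by
                rw [this]; exact abs_add_le _ _
            _ = |t p.1 - x p.1| + |t p.2 - x p.2| := by rw [abs_sub_comm]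
        linarith
      have hπB : π (Set.pi Set.univ B) = ∏ i, μ (B i) := Measure.pi_pi _ _
      have : π (Set.pi Set.univ B) = 0 := measure_mono_null hTsub hnull
      rw [hπB, Finset.prod_eq_zero_iff] at this
      obtain ⟨i, _, hi⟩ := this
      exact hBpos i hi
    have hfin : supp.Finite := Set.finite_of_encard_le_coe hcard
    refine ⟨hfin.toFinset, ?_, ?_⟩
    · rw [hfin.encard_eq_coe_toFinset_card] at hcard
      exact_mod_cast hcard
    · have : (↑hfin.toFinset : Set ℝ) = supp := hfin.coe_toFinset
      rw [this]
      exact hcompl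
  · rintro ⟨S, hScard, hS0⟩
    -- a.e. all coordinates in S
    set A : Set (Fin (n + 1) → ℝ) := Set.pi Set.univ (fun _ => (S : Set ℝ)) with hA
    have hSm : MeasurableSet (S : Set ℝ) := S.finite_toSet.measurableSet
    have hAm : MeasurableSet A := MeasurableSet.pi (Set.countable_univ) (fun _ _ => hSm)
    have hμS : μ (S : Set ℝ) = 1 := (prob_compl_eq_zero_iff hSm).1 hS0
    have hπA : π A = 1 := by
      rw [hA, Measure.pi_pi]
      simp [hμS]
    have hAc : π Aᶜ = 0 := (prob_compl_eq_zero_iff hAm).2 hπA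
    have hmemae : A ∈ (ae π) := by rwa [mem_ae_iff]
    have hzero : ∀ t ∈ A, ENNReal.ofReal |vand t| = 0 := by
      intro t ht
      have hmap : ∀ i, t i ∈ S := fun i => ht i (Set.mem_univ i)
      obtain ⟨i, j, hij, heq⟩ := Fintype.exists_ne_map_eq_of_card_lt
        (fun i : Fin (n + 1) => (⟨t i, hmap i⟩ : {x // x ∈ S})) (by
          simp only [Fintype.card_coe, Fintype.card_fin]
          omega)
      have : t i = t j := congrArg Subtype.val heq
      rw [vand_eq_zero hij this]
      simp
    have : (fun t => ENNReal.ofReal |vand t|) =ᵐ[π] 0 :=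
      Filter.eventually_of_mem hmemae hzero
    rw [lintegral_congr_ae this]
    simp
end

section
/- Let μ be a regular Borel probability measure on an interval I, not supported on n or fewer points, let ℓ_n(μ) be as defined via the Vandermonde ratio, and fix ε ∈ (0,1). Then there exist at most n disjoint closed intervals I_1,…,I_k (possibly degenerate) such that μ(⋃_j I_j) ≥ 1 − ε, the total Lebesgue measure |⋃_j I_j| ≤ C_{n,ε} · ℓ_n(μ), and μ(I_j) ≥ ε/(2n) for each j. -/
open MeasureTheory Set

lemma vand_measurable {m : ℕ} : Measurable (vand (m := m)) := by
  unfold vand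
  exact Finset.measurable_prod _ fun p _ =>
    ((measurable_pi_apply _).sub (measurable_pi_apply _))

lemma vand_ne_zero_s8 {m : ℕ} {t : Fin m → ℝ} (ht : Function.Injective t) : vand t ≠ 0 := by
  unfold vand
  rw [Finset.prod_ne_zero_iff]
  intro p hp
  simp only [Finset.mem_filter] at hp
  exact sub_ne_zero.2 fun h => absurd (ht h) (ne_of_gt hp.2)

lemma vand_eq_Ioi {m : ℕ} (t : Fin m → ℝ) :
    vand t = ∏ i, ∏ j ∈ Finset.Ioi i, (t j - t i) := by
  rw [vand, ← Finset.prod_sigma Finset.univ (fun i => Finset.Ioi i)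
    (fun p => t p.2 - t p.1)]
  apply Finset.prod_nbij' (fun p => (⟨p.1, p.2⟩ : (_ : Fin m) × Fin m)) (fun p => (p.1, p.2)) <;>
    simp [Finset.mem_sigma]

lemma vand_cons {m : ℕ} (x : ℝ) (s : Fin m → ℝ) :
    vand (Fin.cons x s) = (∏ j, (s j - x)) * vand s := by
  rw [vand_eq_Ioi, Fin.prod_univ_succ, Fin.prod_Ioi_zero, vand_eq_Ioi]
  simp only [Fin.cons_succ, Fin.cons_zero]
  congr 1
  apply Finset.prod_congr rfl
  intro i _
  rw [Fin.prod_Ioi_succ]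
  simp

lemma split_lemma (ν : Measure ℝ) {s : Set ℝ}
    (hx : ∀ x : ℝ, ν (s \ {x}) ≠ 0) :
    ∃ t : Set ℝ, MeasurableSet t ∧ ν (s ∩ t) ≠ 0 ∧ ν (s \ t) ≠ 0 := by
  have h0 : ν s ≠ 0 := by
    intro h
    exact hx 0 (measure_mono_null diff_subset h)
  by_contra h
  push_neg at h
  have key : ∀ c : ℝ, ν (s ∩ Iic c) = 0 ∨ ν (s \ Iic c) = 0 := by
    intro c
    by_cases h1 : ν (s ∩ Iic c) = 0
    · exact Or.inl h1
    · exact Or.inr (h (Iic c) measurableSet_Iic h1)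
  set Z : Set ℝ := {c | ν (s ∩ Iic c) = 0} with hZ
  have hZne : Z.Nonempty := by
    by_contra hne
    rw [Set.not_nonempty_iff_eq_empty] at hne
    have hall : ∀ k : ℕ, ν (s \ Iic (-(k:ℝ))) = 0 := by
      intro k
      rcases key (-(k:ℝ)) with h1 | h1
      · exact absurd (hZ ▸ h1 : (-(k:ℝ)) ∈ Z) (by simp [hne])
      · exact h1
    apply h0
    have : s ⊆ ⋃ k : ℕ, s \ Iic (-(k:ℝ)) := by
      intro x hxs
      obtain ⟨k, hk⟩ := exists_nat_gt (-x)
      exact mem_iUnion.2 ⟨k, hxs, by simp; linarith⟩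
    exact measure_mono_null this (measure_iUnion_null hall)
  have hZbdd : BddAbove Z := by
    have : ∃ k : ℕ, ν (s \ Iic (k:ℝ)) = 0 := by
      by_contra hne
      push_neg at hne
      have hall : ∀ k : ℕ, ν (s ∩ Iic (k:ℝ)) = 0 := fun k => (key _).resolve_right (hne k)
      apply h0
      have : s ⊆ ⋃ k : ℕ, s ∩ Iic (k:ℝ) := by
        intro x hxs
        obtain ⟨k, hk⟩ := exists_nat_gt x
        exact mem_iUnion.2 ⟨k, hxs, le_of_lt hk⟩
      exact measure_mono_null this (measure_iUnion_null hall)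
    obtain ⟨k, hk⟩ := this
    refine ⟨k, fun c hc => ?_⟩
    by_contra hck
    push_neg at hck
    apply h0
    have : s ⊆ (s ∩ Iic c) ∪ (s \ Iic (k:ℝ)) := by
      intro x hxs
      by_cases hle : x ≤ c
      · exact Or.inl ⟨hxs, hle⟩
      · exact Or.inr ⟨hxs, by simp; push_neg at hle; linarith⟩
    exact measure_mono_null this (measure_union_null hc hk)
  set c₀ := sSup Z with hc₀
  have hlo : ν (s ∩ Iio c₀) = 0 := by
    have hsub : s ∩ Iio c₀ ⊆ ⋃ k : ℕ, s ∩ Iic (c₀ - 1/(k+1)) := by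
      rintro x ⟨hxs, hxlt⟩
      obtain ⟨k, hk⟩ := exists_nat_one_div_lt (K := ℝ) (sub_pos.2 hxlt)
      exact mem_iUnion.2 ⟨k, hxs, by rw [mem_Iic]; push_cast at hk ⊢; linarith⟩
    refine measure_mono_null hsub (measure_iUnion_null fun k => ?_)
    have hlt : c₀ - 1/((k:ℝ)+1) < c₀ := by
      have h1 : (0:ℝ) < 1/((k:ℝ)+1) := by positivity
      linarith
    obtain ⟨c, hcZ, hcgt⟩ := exists_lt_of_lt_csSup hZne hlt
    exact measure_mono_null (inter_subset_inter_right s (Iic_subset_Iic.2 hcgt.le)) hcZ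
  have hhi : ν (s \ Iic c₀) = 0 := by
    have hsub : s \ Iic c₀ ⊆ ⋃ k : ℕ, s \ Iic (c₀ + 1/(k+1)) := by
      rintro x ⟨hxs, hxgt⟩
      rw [mem_Iic, not_le] at hxgt
      obtain ⟨k, hk⟩ := exists_nat_one_div_lt (K := ℝ) (sub_pos.2 hxgt)
      refine mem_iUnion.2 ⟨k, hxs, ?_⟩
      rw [mem_Iic, not_le]; push_cast at hk ⊢; linarith
    refine measure_mono_null hsub (measure_iUnion_null fun k => ?_)
    have hnotZ : (c₀ + 1/((k:ℝ)+1)) ∉ Z := by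
      intro hmem
      have := le_csSup hZbdd hmem
      have : (0:ℝ) < 1/((k:ℝ)+1) := by positivity
      linarith
    rcases key (c₀ + 1/((k:ℝ)+1)) with h1 | h1
    · exact absurd h1 hnotZ
    · exact h1
  apply hx c₀
  have : s \ {c₀} ⊆ (s ∩ Iio c₀) ∪ (s \ Iic c₀) := by
    rintro x ⟨hxs, hxne⟩
    simp only [mem_singleton_iff] at hxne
    rcases lt_trichotomy x c₀ with h1 | h1 | h1
    · exact Or.inl ⟨hxs, h1⟩
    · exact absurd h1 hxne
    · exact Or.inr ⟨hxs, by simpa using h1.not_ge⟩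
  exact measure_mono_null this (measure_union_null hlo hhi)

lemma exists_disjoint_list (ν : Measure ℝ) :
    ∀ (j : ℕ) (s : Set ℝ), MeasurableSet s →
      (∀ S : Finset ℝ, S.card ≤ j → ν (s \ ↑S) ≠ 0) →
      ∃ L : List (Set ℝ), j + 1 ≤ L.length ∧
        (∀ u ∈ L, MeasurableSet u ∧ u ⊆ s ∧ ν u ≠ 0) ∧ L.Pairwise Disjoint := by
  intro j
  induction j with
  | zero =>
    intro s hs hS
    refine ⟨[s], by simp, ?_, by simp⟩
    intro u hu
    simp only [List.mem_singleton] at hu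
    subst hu
    refine ⟨hs, subset_rfl, ?_⟩
    have := hS ∅ (by simp)
    simpa using this
  | succ j IH =>
    intro s hs hS
    have hx : ∀ x : ℝ, ν (s \ {x}) ≠ 0 := by
      intro x
      have := hS {x} (by simp [Nat.one_le_iff_ne_zero])
      simpa using this
    obtain ⟨t, htm, ht1, ht2⟩ := split_lemma ν hx
    set t' : Set ℝ := s ∩ t with ht'
    have ht'm : MeasurableSet t' := hs.inter htm
    have hstm : MeasurableSet (s \ t') := hs.diff ht'm
    have hst : ν (s \ t') ≠ 0 := by
      have : s \ t = s \ t' := by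
        ext x; simp only [ht', mem_diff, mem_inter_iff]; tauto
      rwa [this] at ht2
    have hdisj : Disjoint t' (s \ t') := disjoint_sdiff_self_right
    by_cases hkill : ∃ S : Finset ℝ, ν (t' \ ↑S) = 0
    · by_cases hkill2 : ∃ S : Finset ℝ, ν ((s \ t') \ ↑S) = 0
      · -- both killable: atoms
        obtain ⟨S₀, hS₀⟩ := hkill
        obtain ⟨S₁, hS₁⟩ := hkill2
        classical
        set A₀ : Finset ℝ := S₀.filter (fun x => ν (t' ∩ {x}) ≠ 0) with hA₀
        set A₁ : Finset ℝ := S₁.filter (fun x => ν ((s \ t') ∩ {x}) ≠ 0) with hA₁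
        have hkA₀ : ν (t' \ ↑A₀) = 0 := by
          have hsub : t' \ ↑A₀ ⊆ (t' \ ↑S₀) ∪ ⋃ x ∈ (↑(S₀ \ A₀) : Set ℝ), t' ∩ {x} := by
            rintro y ⟨hy, hyA⟩
            by_cases hyS : y ∈ S₀
            · refine Or.inr (mem_iUnion₂.2 ⟨y, ?_, hy, rfl⟩)
              simp only [Finset.coe_sdiff, mem_diff, Finset.mem_coe]
              exact ⟨hyS, hyA⟩
            · exact Or.inl ⟨hy, hyS⟩
          refine measure_mono_null hsub (measure_union_null hS₀ ?_)
          rw [measure_biUnion_null_iff (Finset.countable_toSet _)]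
          intro x hxmem
          simp only [Finset.coe_sdiff, mem_diff, Finset.mem_coe, hA₀, Finset.mem_filter,
            not_and, not_not] at hxmem
          exact hxmem.2 hxmem.1
        have hkA₁ : ν ((s \ t') \ ↑A₁) = 0 := by
          have hsub : (s \ t') \ ↑A₁ ⊆ ((s \ t') \ ↑S₁) ∪
              ⋃ x ∈ (↑(S₁ \ A₁) : Set ℝ), (s \ t') ∩ {x} := by
            rintro y ⟨hy, hyA⟩
            by_cases hyS : y ∈ S₁
            · refine Or.inr (mem_iUnion₂.2 ⟨y, ?_, hy, rfl⟩)
              simp only [Finset.coe_sdiff, mem_diff, Finset.mem_coe]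
              exact ⟨hyS, hyA⟩
            · exact Or.inl ⟨hy, hyS⟩
          refine measure_mono_null hsub (measure_union_null hS₁ ?_)
          rw [measure_biUnion_null_iff (Finset.countable_toSet _)]
          intro x hxmem
          simp only [Finset.coe_sdiff, mem_diff, Finset.mem_coe, hA₁, Finset.mem_filter,
            not_and, not_not] at hxmem
          exact hxmem.2 hxmem.1
        have hcard : j + 2 ≤ (A₀ ∪ A₁).card := by
          by_contra hc
          push_neg at hc
          apply hS (A₀ ∪ A₁) (by omega)
          have hsub : s \ ↑(A₀ ∪ A₁) ⊆ (t' \ ↑A₀) ∪ ((s \ t') \ ↑A₁) := by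
            rintro y ⟨hy, hyA⟩
            simp only [Finset.coe_union, mem_union, not_or] at hyA
            by_cases hyt : y ∈ t'
            · exact Or.inl ⟨hyt, hyA.1⟩
            · exact Or.inr ⟨⟨hy, hyt⟩, hyA.2⟩
          exact measure_mono_null hsub (measure_union_null hkA₀ hkA₁)
        refine ⟨A₀.toList.map (fun x => t' ∩ {x}) ++ A₁.toList.map (fun x => (s \ t') ∩ {x}),
          ?_, ?_, ?_⟩
        · have : (A₀ ∪ A₁).card ≤ A₀.card + A₁.card := Finset.card_union_le _ _
          simp only [List.length_append, List.length_map, Finset.length_toList]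
          omega
        · intro u hu
          simp only [List.mem_append, List.mem_map, Finset.mem_toList] at hu
          rcases hu with ⟨x, hxA, rfl⟩ | ⟨x, hxA, rfl⟩
          · simp only [hA₀, Finset.mem_filter] at hxA
            exact ⟨ht'm.inter (measurableSet_singleton x),
              (inter_subset_left).trans (inter_subset_left), hxA.2⟩
          · simp only [hA₁, Finset.mem_filter] at hxA
            exact ⟨hstm.inter (measurableSet_singleton x),
              (inter_subset_left).trans diff_subset, hxA.2⟩
        · rw [List.pairwise_append]
          refine ⟨?_, ?_, ?_⟩
          · refine List.Pairwise.map _ ?_ (Finset.nodup_toList A₀)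
            intro a b hab
            exact Disjoint.mono inter_subset_right inter_subset_right
              (by simpa using hab)
          · refine List.Pairwise.map _ ?_ (Finset.nodup_toList A₁)
            intro a b hab
            exact Disjoint.mono inter_subset_right inter_subset_right
              (by simpa using hab)
          · intro u hu v hv
            simp only [List.mem_map, Finset.mem_toList] at hu hv
            obtain ⟨x, _, rfl⟩ := hu
            obtain ⟨y, _, rfl⟩ := hv
            exact hdisj.mono inter_subset_left inter_subset_left
      · -- s \ t' not killable
        push_neg at hkill2
        obtain ⟨L', hlen, hmem, hpw⟩ := IH (s \ t') hstm (fun S _ => hkill2 S)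
        refine ⟨t' :: L', by simpa using hlen, ?_, ?_⟩
        · rintro u hu
          rcases List.mem_cons.1 hu with rfl | hu
          · exact ⟨ht'm, inter_subset_left, ht1⟩
          · obtain ⟨h1, h2, h3⟩ := hmem u hu
            exact ⟨h1, h2.trans diff_subset, h3⟩
        · refine List.pairwise_cons.2 ⟨?_, hpw⟩
          intro u hu
          exact hdisj.mono_right (hmem u hu).2.1
    · -- t' not killable
      push_neg at hkill
      obtain ⟨L', hlen, hmem, hpw⟩ := IH t' ht'm (fun S _ => hkill S)
      refine ⟨(s \ t') :: L', by simpa using hlen, ?_, ?_⟩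
      · rintro u hu
        rcases List.mem_cons.1 hu with rfl | hu
        · exact ⟨hstm, diff_subset, hst⟩
        · obtain ⟨h1, h2, h3⟩ := hmem u hu
          exact ⟨h1, h2.trans inter_subset_left, h3⟩
      · refine List.pairwise_cons.2 ⟨?_, hpw⟩
        intro u hu
        exact hdisj.symm.mono_right (hmem u hu).2.1

lemma integral_vand_pos (n : ℕ) (μ : Measure ℝ) [IsProbabilityMeasure μ]
    (hint : Integrable (fun t : Fin (n + 1) → ℝ => |vand t|) (Measure.pi fun _ => μ))
    (hsupp : ¬ ∃ S : Finset ℝ, S.card ≤ n ∧ μ (↑S)ᶜ = 0) :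
    0 < ∫ t : Fin (n + 1) → ℝ, |vand t| ∂(Measure.pi fun _ => μ) := by
  push_neg at hsupp
  rcases lt_or_eq_of_le (integral_nonneg (μ := Measure.pi fun _ => μ) (f := fun t : Fin (n + 1) → ℝ => |vand t|) (fun t => abs_nonneg _)) with h | h
  · exact h
  exfalso
  have hae : (fun t : Fin (n + 1) → ℝ => |vand t|) =ᵐ[Measure.pi fun _ => μ] 0 := by
    rw [← integral_eq_zero_iff_of_nonneg (fun t => abs_nonneg _) hint]
    exact h.symm
  obtain ⟨L, hlen, hmem, hpw⟩ := exists_disjoint_list μ n univ MeasurableSet.univ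
    (by
      intro S hcard
      have : univ \ (↑S : Set ℝ) = (↑S)ᶜ := by simp [compl_eq_univ_diff]
      rw [this]
      exact hsupp S hcard)
  set B : Fin (n + 1) → Set ℝ := fun i => L.get ⟨i, lt_of_lt_of_le i.isLt hlen⟩ with hB
  have hBmem : ∀ i, B i ∈ L := fun i => L.get_mem _
  have hBdisj : ∀ i j : Fin (n + 1), i ≠ j → Disjoint (B i) (B j) := by
    have hpg := List.pairwise_iff_get.1 hpw
    intro i j hij
    rcases Nat.lt_or_ge (i : ℕ) (j : ℕ) with hlt | hge
    · exact hpg _ _ hlt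
    · have hlt : (j : ℕ) < (i : ℕ) :=
        lt_of_le_of_ne hge (fun hc => hij (Fin.ext hc.symm))
      exact (hpg _ _ hlt).symm
  have hbox : Set.univ.pi B ⊆ {t : Fin (n + 1) → ℝ | ¬ |vand t| = 0} := by
    intro t ht
    simp only [mem_setOf_eq, abs_eq_zero]
    apply vand_ne_zero_s8
    intro i j hij
    by_contra hne
    exact Set.disjoint_left.1 (hBdisj i j hne) (ht i trivial) (hij ▸ ht j trivial)
  have hnull : (Measure.pi fun _ => μ) (Set.univ.pi B) = 0 := by
    have := ae_iff.1 hae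
    simp only [Pi.zero_apply] at this
    exact measure_mono_null hbox this
  rw [Measure.pi_pi] at hnull
  have : ∀ i : Fin (n + 1), μ (B i) ≠ 0 := fun i => (hmem _ (hBmem i)).2.2
  rw [Finset.prod_eq_zero_iff] at hnull
  obtain ⟨i, _, hi⟩ := hnull
  exact this i hi

lemma exists_good_s (n : ℕ) (μ : Measure ℝ) [IsProbabilityMeasure μ]
    (ℓ : ℝ)
    (hint1 : Integrable (fun t : Fin (n+1) → ℝ => |vand t|) (Measure.pi fun _ => μ))
    (hint0 : Integrable (fun t : Fin n → ℝ => |vand t|) (Measure.pi fun _ => μ))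
    (heq : ℓ ^ n * ∫ t : Fin n → ℝ, |vand t| ∂(Measure.pi fun _ => μ)
          = ∫ t : Fin (n+1) → ℝ, |vand t| ∂(Measure.pi fun _ => μ))
    (hpos : 0 < ∫ t : Fin n → ℝ, |vand t| ∂(Measure.pi fun _ => μ)) :
    ∃ s : Fin n → ℝ, Integrable (fun x => ∏ j, |s j - x|) μ ∧
      (∫ x, ∏ j, |s j - x| ∂μ) ≤ ℓ ^ n := by
  set P : Measure (Fin n → ℝ) := Measure.pi fun _ => μ with hP
  set ν : Measure (ℝ × (Fin n → ℝ)) := μ.prod P with hν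
  set F : ℝ × (Fin n → ℝ) → ℝ := fun z => |vand (Fin.cons z.1 z.2)| with hF
  have hFfac : ∀ z : ℝ × (Fin n → ℝ), F z = (∏ j, |z.2 j - z.1|) * |vand z.2| := by
    intro z
    rw [hF]
    simp only [vand_cons, abs_mul, Finset.abs_prod]
  have hFmeas : Measurable F := by
    apply Measurable.abs
    apply vand_measurable.comp
    rw [measurable_pi_iff]
    intro i
    refine Fin.cases ?_ ?_ i
    · simpa using measurable_fst
    · intro j
      simp; exact (measurable_pi_apply j).comp measurable_snd
  set e := MeasurableEquiv.piFinSuccAbove (fun _ : Fin (n+1) => ℝ) 0 with he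
  have hmp : MeasurePreserving e (Measure.pi fun _ : Fin (n+1) => μ) ν :=
    measurePreserving_piFinSuccAbove (fun _ => μ) 0
  have hcomp : ∀ t : Fin (n+1) → ℝ, F (e t) = |vand t| := by
    intro t
    have : (e t).1 = t 0 := rfl
    have h2 : (e t).2 = fun j : Fin n => t j.succ := rfl
    rw [hF]
    simp only [this, h2]
    congr 1
    rw [show (fun j : Fin n => t j.succ) = Fin.tail t from rfl, Fin.cons_self_tail]
  have hFν : Integrable F ν := by
    rw [← hmp.map_eq, integrable_map_equiv]
    have : F ∘ e = fun t => |vand t| := funext hcomp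
    rw [this]
    exact hint1
  have hintF : ∫ z, F z ∂ν = ∫ t : Fin (n+1) → ℝ, |vand t| ∂(Measure.pi fun _ => μ) := by
    rw [← hmp.integral_comp' F]
    exact integral_congr_ae (Filter.EventuallyEq.of_eq (funext hcomp))
  -- marginal
  have hmarg : Integrable (fun s => ∫ x, F (x, s) ∂μ) P := hFν.integral_prod_right
  have hiter : ∫ s, (∫ x, F (x, s) ∂μ) ∂P = ∫ t : Fin (n+1) → ℝ, |vand t|
      ∂(Measure.pi fun _ => μ) := by
    rw [← hintF, integral_prod_symm _ hFν]
  set m : (Fin n → ℝ) → ℝ := fun s => ∫ x, F (x, s) ∂μ with hm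
  set h : (Fin n → ℝ) → ℝ := fun s => m s - ℓ ^ n * |vand s| with hh
  have hhint : Integrable h P := hmarg.sub (hint0.const_mul _)
  have hhzero : ∫ s, h s ∂P = 0 := by
    rw [hh]
    simp only []
    rw [integral_sub hmarg (hint0.const_mul _), integral_const_mul, hiter, heq, sub_self]
  by_contra hcon
  push_neg at hcon
  -- a.e. nonneg
  have haeslice : ∀ᵐ s ∂P, Integrable (fun x => F (x, s)) μ := hFν.prod_left_ae
  have haepos : ∀ᵐ s ∂P, (Integrable (fun x => F (x, s)) μ) → 0 ≤ h s := by
    filter_upwards [] with s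
    intro hsl
    by_cases hv : vand s = 0
    · have : m s = ∫ x, F (x, s) ∂μ := rfl
      have hnn : 0 ≤ m s := integral_nonneg (fun x => abs_nonneg _)
      simp only [hh, hv, abs_zero, mul_zero, sub_zero]
      exact hnn
    · have hvpos : 0 < |vand s| := abs_pos.2 hv
      have hslint : Integrable (fun x => ∏ j, |s j - x|) μ := by
        have : (fun x => ∏ j, |s j - x|) = fun x => F (x, s) * |vand s|⁻¹ := by
          funext x
          rw [hFfac (x, s)]
          field_simp
        rw [this]
        exact hsl.mul_const _
      have hgt := hcon s hslint
      have hmeq : m s = (∫ x, ∏ j, |s j - x| ∂μ) * |vand s| := by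
        rw [hm]
        simp only []
        rw [show (fun x => F (x, s)) = fun x => (∏ j, |s j - x|) * |vand s| from
          funext (fun x => hFfac (x, s)), integral_mul_const]
      rw [hh]
      simp only []
      rw [hmeq]
      nlinarith [hgt, hvpos]
  have hae0 : h =ᵐ[P] 0 := by
    have hnn : 0 ≤ᵐ[P] h := by
      filter_upwards [haeslice, haepos] with s h1 h2
      exact h2 h1
    have := (integral_eq_zero_iff_of_nonneg_ae hnn hhint).1 hhzero
    exact this
  -- contradiction with hpos
  have hvand0 : (fun s => |vand s|) =ᵐ[P] 0 := by
    filter_upwards [hae0, haeslice, haepos] with s h0 h1 h2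
    by_contra hne
    have hv : vand s ≠ 0 := by
      simpa [abs_eq_zero] using hne
    have hvpos : 0 < |vand s| := abs_pos.2 hv
    have hslint : Integrable (fun x => ∏ j, |s j - x|) μ := by
      have : (fun x => ∏ j, |s j - x|) = fun x => F (x, s) * |vand s|⁻¹ := by
        funext x
        rw [hFfac (x, s)]
        field_simp
      rw [this]
      exact h1.mul_const _
    have hgt := hcon s hslint
    have hmeq : m s = (∫ x, ∏ j, |s j - x| ∂μ) * |vand s| := by
      rw [hm]
      simp only []
      rw [show (fun x => F (x, s)) = fun x => (∏ j, |s j - x|) * |vand s| from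
        funext (fun x => hFfac (x, s)), integral_mul_const]
    have : h s = 0 := h0
    rw [hh] at this
    simp only [] at this
    rw [hmeq] at this
    nlinarith [hgt, hvpos]
  rw [integral_congr_ae hvand0] at hpos
  simp at hpos
section MergeSection
attribute [local instance 2000] instBEqOfDecidableEq
local instance (priority := 2000) {α : Type*} [DecidableEq α] : LawfulBEq α where
  eq_of_beq h := of_decide_eq_true h
  rfl := by simp [instBEqOfDecidableEq]

lemma biUnion_list_congr {α β : Type*} {f : α → Set β} {L M : List α}
    (h : ∀ x, x ∈ L ↔ x ∈ M) : ⋃ p ∈ L, f p = ⋃ p ∈ M, f p := by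
  ext y
  simp only [Set.mem_iUnion]
  constructor
  · rintro ⟨p, hp, hy⟩; exact ⟨p, (h p).mp hp, hy⟩
  · rintro ⟨p, hp, hy⟩; exact ⟨p, (h p).mpr hp, hy⟩

lemma biUnion_list_cons {α β : Type*} (f : α → Set β) (a : α) (l : List α) :
    ⋃ p ∈ (a :: l), f p = f a ∪ ⋃ p ∈ l, f p := by
  ext y
  simp [List.mem_cons, or_and_right, exists_or]

lemma icc_merge {p q : ℝ × ℝ} (hp : p.1 ≤ p.2) (hq : q.1 ≤ q.2)
    (hnd : ¬ Disjoint (Icc p.1 p.2) (Icc q.1 q.2)) :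
    Icc p.1 p.2 ∪ Icc q.1 q.2 = Icc (min p.1 q.1) (max p.2 q.2) := by
  obtain ⟨z, hz1, hz2⟩ := Set.not_disjoint_iff.1 hnd
  exact Set.Icc_union_Icc' (hz2.1.trans hz1.2) (hz1.1.trans hz2.2)

lemma merge_intervals : ∀ (N : ℕ) (L : List (ℝ × ℝ)), L.length ≤ N → (∀ p ∈ L, p.1 ≤ p.2) →
    ∃ M : List (ℝ × ℝ), M.length ≤ L.length ∧ (∀ p ∈ M, p.1 ≤ p.2) ∧
      M.Pairwise (fun p q => Disjoint (Icc p.1 p.2) (Icc q.1 q.2)) ∧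
      (⋃ p ∈ M, Icc p.1 p.2) = ⋃ p ∈ L, Icc p.1 p.2 := by
  intro N
  induction N with
  | zero =>
    intro L hlen _
    have : L = [] := List.length_eq_zero_iff.1 (Nat.le_zero.1 hlen)
    subst this
    exact ⟨[], by simp, by simp, by simp, rfl⟩
  | succ N IH =>
    intro L hlen hle
    by_cases hnd : L.Nodup
    · by_cases hpw : L.Pairwise (fun p q => Disjoint (Icc p.1 p.2) (Icc q.1 q.2))
      · exact ⟨L, le_rfl, hle, hpw, rfl⟩
      · rw [List.pairwise_iff_get] at hpw
        push_neg at hpw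
        obtain ⟨i, j, hij, hndis⟩ := hpw
        set p := L.get i with hpdef
        set q := L.get j with hqdef
        have hpmem : p ∈ L := L.get_mem _
        have hqmem : q ∈ L := L.get_mem _
        have hpq : p ≠ q := by
          intro hc
          exact absurd (List.nodup_iff_injective_get.1 hnd hc) hij.ne
        have hqmem' : q ∈ L.erase p := (List.mem_erase_of_ne hpq.symm).2 hqmem
        set rest := (L.erase p).erase q with hrest
        have hperm : L.Perm (p :: q :: rest) :=
          (List.perm_cons_erase hpmem).trans
            ((List.perm_cons_erase hqmem').cons p)
        set merged : ℝ × ℝ := (min p.1 q.1, max p.2 q.2) with hmerged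
        have hrestsub : ∀ x, x ∈ rest → x ∈ L := by
          intro x hx
          exact List.mem_of_mem_erase (List.mem_of_mem_erase hx)
        have hle' : ∀ x ∈ (merged :: rest), x.1 ≤ x.2 := by
          intro x hx
          rcases List.mem_cons.1 hx with rfl | hx
          · exact le_trans (min_le_left _ _) (le_trans (hle p hpmem)
              (le_max_left _ _))
          · exact hle x (hrestsub x hx)
        have hlen' : (merged :: rest).length ≤ N := by
          have h1 : (L.erase p).length = L.length - 1 := List.length_erase_of_mem hpmem
          have h2 : rest.length = (L.erase p).length - 1 := List.length_erase_of_mem hqmem'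
          have h3 : 2 ≤ L.length := by
            have := j.isLt
            have : (i : ℕ) < (j : ℕ) := hij
            omega
          simp only [List.length_cons]
          omega
        obtain ⟨M, hMlen, hMle, hMpw, hMun⟩ := IH (merged :: rest) hlen' hle'
        refine ⟨M, ?_, hMle, hMpw, ?_⟩
        · have h1 : (L.erase p).length = L.length - 1 := List.length_erase_of_mem hpmem
          have h2 : rest.length = (L.erase p).length - 1 := List.length_erase_of_mem hqmem'
          have h3 : 2 ≤ L.length := by
            have := j.isLt
            have : (i : ℕ) < (j : ℕ) := hij
            omega
          simp only [List.length_cons] at hMlen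
          omega
        · rw [hMun]
          have hL : (⋃ x ∈ L, Icc x.1 x.2) = ⋃ x ∈ (p :: q :: rest), Icc x.1 x.2 :=
            biUnion_list_congr (fun x => hperm.mem_iff)
          rw [hL, biUnion_list_cons, biUnion_list_cons, biUnion_list_cons, ← union_assoc,
            icc_merge (hle p hpmem) (hle q hqmem) hndis]
    · rw [List.nodup_iff_injective_get] at hnd
      rw [Function.not_injective_iff] at hnd
      obtain ⟨i, j, heq, hij⟩ := hnd
      set p := L.get i with hpdef
      have hpmem : p ∈ L := L.get_mem _
      have hpdup : p ∈ L.erase p := by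
        have h2 : L.Duplicate p := by
          rw [List.duplicate_iff_exists_distinct_get]
          rcases lt_or_gt_of_ne hij with hlt | hlt
          · exact ⟨i, j, hlt, rfl, heq⟩
          · exact ⟨j, i, hlt, heq, rfl⟩
        have hc2 : 2 ≤ L.count p := List.duplicate_iff_two_le_count.1 h2
        have hc1 : 1 ≤ (L.erase p).count p := by
          rw [List.count_erase_self]; omega
        exact List.count_pos_iff.1 hc1
      have hlen' : (L.erase p).length ≤ N := by
        have h1 : (L.erase p).length = L.length - 1 := List.length_erase_of_mem hpmem
        have h3 : 1 ≤ L.length := by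
          have := i.isLt; omega
        omega
      obtain ⟨M, hMlen, hMle, hMpw, hMun⟩ := IH (L.erase p) hlen'
        (fun x hx => hle x (List.mem_of_mem_erase hx))
      refine ⟨M, ?_, hMle, hMpw, ?_⟩
      · have h1 : (L.erase p).length = L.length - 1 := List.length_erase_of_mem hpmem
        omega
      · rw [hMun]
        apply biUnion_list_congr
        intro x
        constructor
        · exact List.mem_of_mem_erase
        · intro hx
          by_cases hxp : x = p
          · subst hxp; exact hpdup
          · exact (List.mem_erase_of_ne hxp).2 hx

end MergeSection

lemma list_union_measurable (L : List (ℝ × ℝ)) :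
    MeasurableSet (⋃ p ∈ L, Icc p.1 p.2) :=
  Set.Finite.measurableSet_biUnion L.finite_toSet (fun p _ => measurableSet_Icc)

lemma biUnion_list_cons' {α β : Type*} (f : α → Set β) (a : α) (l : List α) :
    ⋃ p ∈ (a :: l), f p = f a ∪ ⋃ p ∈ l, f p := by
  ext y
  simp [List.mem_cons, or_and_right, exists_or]

lemma iUnion_fin_eq_list (L : List (ℝ × ℝ)) :
    (⋃ j : Fin L.length, Icc (L.get j).1 (L.get j).2) = ⋃ p ∈ L, Icc p.1 p.2 := by
  ext x
  simp only [mem_iUnion]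
  constructor
  · rintro ⟨j, hj⟩
    exact ⟨L.get j, ⟨L.get_mem _, hj⟩⟩
  · rintro ⟨p, hp, hx⟩
    obtain ⟨j, rfl⟩ := List.mem_iff_get.1 hp
    exact ⟨j, hx⟩

lemma prune (μ : Measure ℝ) [IsFiniteMeasure μ] (c : ℝ) (hc : 0 ≤ c) :
    ∀ L : List (ℝ × ℝ), L.Pairwise (fun p q => Disjoint (Icc p.1 p.2) (Icc q.1 q.2)) →
      (μ (⋃ p ∈ L, Icc p.1 p.2)).toReal - c * L.length ≤
        (μ (⋃ p ∈ L.filter (fun p => decide (c ≤ (μ (Icc p.1 p.2)).toReal)), Icc p.1 p.2)).toReal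
  | [] => by
    intro _
    simp
  | p :: L => by
    intro hpw
    rw [List.pairwise_cons] at hpw
    obtain ⟨hd, hpw⟩ := hpw
    have IH := prune μ c hc L hpw
    have hdisj : Disjoint (Icc p.1 p.2) (⋃ q ∈ L, Icc q.1 q.2) := by
      rw [Set.disjoint_iUnion_right]
      intro q
      rw [Set.disjoint_iUnion_right]
      intro hq
      exact hd q hq
    have hsplit : (μ (⋃ x ∈ (p :: L), Icc x.1 x.2)).toReal
        = (μ (Icc p.1 p.2)).toReal + (μ (⋃ q ∈ L, Icc q.1 q.2)).toReal := by
      rw [biUnion_list_cons', measure_union hdisj (list_union_measurable L),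
        ENNReal.toReal_add (measure_ne_top _ _) (measure_ne_top _ _)]
    by_cases hp : c ≤ (μ (Icc p.1 p.2)).toReal
    · have hfilter : (p :: L).filter (fun p => decide (c ≤ (μ (Icc p.1 p.2)).toReal))
          = p :: L.filter (fun p => decide (c ≤ (μ (Icc p.1 p.2)).toReal)) := by
        rw [List.filter_cons_of_pos (by simpa using hp)]
      rw [hfilter]
      have hdisj2 : Disjoint (Icc p.1 p.2)
          (⋃ q ∈ L.filter (fun p => decide (c ≤ (μ (Icc p.1 p.2)).toReal)), Icc q.1 q.2) := by
        refine hdisj.mono_right ?_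
        apply Set.iUnion₂_subset
        intro q hq
        exact Set.subset_biUnion_of_mem (u := fun q : ℝ × ℝ => Icc q.1 q.2)
          (List.mem_of_mem_filter hq)
      have hsplit2 : (μ (⋃ x ∈ (p :: L.filter (fun p => decide (c ≤ (μ (Icc p.1 p.2)).toReal))),
            Icc x.1 x.2)).toReal
          = (μ (Icc p.1 p.2)).toReal +
            (μ (⋃ q ∈ L.filter (fun p => decide (c ≤ (μ (Icc p.1 p.2)).toReal)),
              Icc q.1 q.2)).toReal := by
        rw [biUnion_list_cons', measure_union hdisj2 (list_union_measurable _),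
          ENNReal.toReal_add (measure_ne_top _ _) (measure_ne_top _ _)]
      rw [hsplit, hsplit2]
      simp only [List.length_cons]
      push_cast
      nlinarith [IH, hc]
    · have hfilter : (p :: L).filter (fun p => decide (c ≤ (μ (Icc p.1 p.2)).toReal))
          = L.filter (fun p => decide (c ≤ (μ (Icc p.1 p.2)).toReal)) := by
        rw [List.filter_cons_of_neg (by simpa using hp)]
      rw [hfilter, hsplit]
      simp only [List.length_cons]
      push_neg at hp
      push_cast
      nlinarith [IH, hc, hp]

/-- if the probability measure `μ` is not supported on `n` or fewer
points and `ℓ = ℓ_n(μ)` (defined by the Vandermonde ratio), then there are at most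
`n` disjoint closed intervals carrying `μ`-mass at least `1 - ε`, of total length
at most `C_{n,ε} ℓ`, each of `μ`-measure at least `ε/(2n)`. -/
theorem statement8 (n : ℕ) (hn : 0 < n) (ε : ℝ) (hε : ε ∈ Set.Ioo (0 : ℝ) 1) :
    ∃ C : ℝ, 0 < C ∧
      ∀ (μ : Measure ℝ), IsProbabilityMeasure μ →
        ∀ ℓ : ℝ, 0 ≤ ℓ →
        Integrable (fun t : Fin (n + 1) → ℝ => |vand t|) (Measure.pi fun _ => μ) →
        Integrable (fun t : Fin n → ℝ => |vand t|) (Measure.pi fun _ => μ) →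
        (ℓ ^ n * ∫ t : Fin n → ℝ, |vand t| ∂(Measure.pi fun _ => μ))
          = (∫ t : Fin (n + 1) → ℝ, |vand t| ∂(Measure.pi fun _ => μ)) →
        (¬ ∃ S : Finset ℝ, S.card ≤ n ∧ μ (↑S)ᶜ = 0) →
        ∃ (k : ℕ) (a b : Fin k → ℝ), k ≤ n ∧ (∀ j, a j ≤ b j) ∧
          (Pairwise fun i j : Fin k => Disjoint (Set.Icc (a i) (b i)) (Set.Icc (a j) (b j))) ∧
          ENNReal.ofReal (1 - ε) ≤ μ (⋃ j, Set.Icc (a j) (b j)) ∧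
          volume (⋃ j, Set.Icc (a j) (b j)) ≤ ENNReal.ofReal (C * ℓ) ∧
          ∀ j, ENNReal.ofReal (ε / (2 * n)) ≤ μ (Set.Icc (a j) (b j)) := by
  classical
  obtain ⟨hε0, hε1⟩ := hε
  have h2ε : (0:ℝ) < 2 / ε := by positivity
  have hnR : (0:ℝ) < (n:ℝ) := by exact_mod_cast hn
  refine ⟨2 * n * (2 / ε) ^ ((n:ℝ)⁻¹), by positivity, ?_⟩
  intro μ hprob ℓ hℓ0 hint1 hint0 heq hsupp
  haveI := hprob
  have hIpos : 0 < ∫ t : Fin (n + 1) → ℝ, |vand t| ∂(Measure.pi fun _ => μ) :=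
    integral_vand_pos n μ hint1 hsupp
  have hInonneg : 0 ≤ ∫ t : Fin n → ℝ, |vand t| ∂(Measure.pi fun _ => μ) :=
    integral_nonneg fun t => abs_nonneg _
  have hI0 : 0 < ∫ t : Fin n → ℝ, |vand t| ∂(Measure.pi fun _ => μ) := by
    rcases lt_or_eq_of_le hInonneg with h | h
    · exact h
    · rw [← h, mul_zero] at heq
      linarith
  have hℓpow : 0 < ℓ ^ n := by
    nlinarith [heq ▸ hIpos, hI0, sq_nonneg (ℓ ^ n)]
  have hℓ : 0 < ℓ := by
    rcases lt_or_eq_of_le hℓ0 with h | h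
    · exact h
    · rw [← h, zero_pow hn.ne'] at hℓpow
      linarith
  obtain ⟨s, hsint, hsle⟩ := exists_good_s n μ ℓ hint1 hint0 heq hI0
  set r : ℝ := (2/ε) ^ ((n:ℝ)⁻¹) * ℓ with hrdef
  have hr : 0 < r := by positivity
  have hrn : r ^ n = (2/ε) * ℓ ^ n := by
    rw [hrdef, mul_pow]
    congr 1
    have hstep : (((2/ε) ^ ((n:ℝ)⁻¹)) : ℝ) ^ (n:ℕ) = (2/ε) ^ (((n:ℝ)⁻¹) * (n:ℝ)) := by
      rw [← Real.rpow_natCast ((2/ε) ^ ((n:ℝ)⁻¹)) n, ← Real.rpow_mul h2ε.le]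
    rw [hstep, inv_mul_cancel₀ (ne_of_gt hnR), Real.rpow_one]
  have hfmeas : Measurable (fun x : ℝ => ∏ j, |s j - x|) :=
    Finset.measurable_prod _ fun j _ => ((measurable_const.sub measurable_id).abs)
  -- Markov
  have hmark : (μ {x | r ^ n ≤ ∏ j, |s j - x|}).toReal ≤ ε / 2 := by
    have h1 := mul_meas_ge_le_integral_of_nonneg (μ := μ)
      (f := fun x => ∏ j, |s j - x|)
      (Filter.Eventually.of_forall fun x => Finset.prod_nonneg fun j _ => abs_nonneg _)
      hsint (r ^ n)
    have h2 : (2/ε) * ℓ^n * (μ {x | r ^ n ≤ ∏ j, |s j - x|}).toReal ≤ ℓ^n := by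
      rw [← hrn]
      exact h1.trans hsle
    have h3 : (μ {x | r ^ n ≤ ∏ j, |s j - x|}).toReal ≤ ℓ^n / ((2/ε) * ℓ^n) := by
      rw [le_div_iff₀ (by positivity)]
      linarith [h2]
    have h4 : ℓ^n / ((2/ε) * ℓ^n) = ε/2 := by
      rw [mul_comm, ← div_div, div_self (ne_of_gt hℓpow), one_div_div]
    linarith [h3, h4 ▸ h3]
  set E : Set ℝ := {x | ∏ j, |s j - x| ≤ r ^ n} with hEdef
  have hEmeas : MeasurableSet E := measurableSet_le hfmeas measurable_const
  have hEc : (μ Eᶜ).toReal ≤ ε/2 := by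
    have hsub : Eᶜ ⊆ {x | r ^ n ≤ ∏ j, |s j - x|} := by
      intro x hx
      simp only [hEdef, mem_compl_iff, mem_setOf_eq, not_le] at hx
      exact le_of_lt hx
    exact le_trans (ENNReal.toReal_mono (measure_ne_top _ _) (measure_mono hsub)) hmark
  have hE : 1 - ε/2 ≤ (μ E).toReal := by
    have hadd : μ E + μ Eᶜ = 1 := by
      rw [measure_add_measure_compl hEmeas, measure_univ]
    have : (μ E).toReal + (μ Eᶜ).toReal = 1 := by
      rw [← ENNReal.toReal_add (measure_ne_top _ _) (measure_ne_top _ _), hadd]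
      simp
    linarith
  have hcover : E ⊆ ⋃ j : Fin n, Icc (s j - r) (s j + r) := by
    intro x hx
    by_contra hnx
    simp only [mem_iUnion, not_exists] at hnx
    have hall : ∀ j : Fin n, r < |s j - x| := by
      intro j
      by_contra hj
      push_neg at hj
      rcases abs_le.1 hj with ⟨h1, h2⟩
      exact hnx j ⟨by linarith, by linarith⟩
    have : r ^ n < ∏ j, |s j - x| := by
      haveI : Nonempty (Fin n) := ⟨⟨0, hn⟩⟩
      calc r ^ n = ∏ _j : Fin n, r := by
            rw [Finset.prod_const, Finset.card_univ, Fintype.card_fin]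
        _ < ∏ j, |s j - x| := by
            exact Finset.prod_lt_prod_of_nonempty (fun j _ => hr) (fun j _ => hall j)
              Finset.univ_nonempty
    rw [hEdef, mem_setOf_eq] at hx
    linarith
  set L0 : List (ℝ × ℝ) := (List.finRange n).map (fun j => (s j - r, s j + r)) with hL0def
  have hL0len : L0.length = n := by simp [hL0def]
  have hL0le : ∀ p ∈ L0, p.1 ≤ p.2 := by
    intro p hp
    simp only [hL0def, List.mem_map] at hp
    obtain ⟨j, _, rfl⟩ := hp
    simp only []
    linarith
  have hL0un : (⋃ p ∈ L0, Icc p.1 p.2) = ⋃ j : Fin n, Icc (s j - r) (s j + r) := by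
    ext x
    simp only [mem_iUnion, hL0def, List.mem_map, List.mem_finRange]
    constructor
    · rintro ⟨p, ⟨j, _, rfl⟩, hxp⟩
      exact ⟨j, hxp⟩
    · rintro ⟨j, hj⟩
      exact ⟨(s j - r, s j + r), ⟨j, trivial, rfl⟩, hj⟩
  obtain ⟨M, hMlen, hMle, hMpw, hMun⟩ := merge_intervals L0.length L0 le_rfl hL0le
  have hMlen' : M.length ≤ n := hL0len ▸ hMlen
  set c : ℝ := ε / (2 * n) with hcdef
  have hc : 0 ≤ c := by positivity
  set M' : List (ℝ × ℝ) := M.filter (fun p => decide (c ≤ (μ (Icc p.1 p.2)).toReal))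
    with hM'def
  have hprune := prune μ c hc M hMpw
  have hM'sub : (⋃ p ∈ M', Icc p.1 p.2) ⊆ ⋃ p ∈ M, Icc p.1 p.2 := by
    apply Set.iUnion₂_subset
    intro p hp
    exact Set.subset_biUnion_of_mem (u := fun q : ℝ × ℝ => Icc q.1 q.2)
      (List.mem_of_mem_filter hp)
  have hEU : E ⊆ ⋃ p ∈ M, Icc p.1 p.2 := by
    rw [hMun, hL0un]
    exact hcover
  have hmass : 1 - ε ≤ (μ (⋃ p ∈ M', Icc p.1 p.2)).toReal := by
    have h1 : (μ E).toReal ≤ (μ (⋃ p ∈ M, Icc p.1 p.2)).toReal :=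
      ENNReal.toReal_mono (measure_ne_top _ _) (measure_mono hEU)
    have h2 : c * M.length ≤ ε / 2 := by
      have : c * M.length ≤ c * n := by
        apply mul_le_mul_of_nonneg_left _ hc
        exact_mod_cast hMlen'
      have hceq : c * n = ε / 2 := by
        rw [hcdef]
        field_simp
      linarith
    linarith [hprune]
  refine ⟨M'.length, fun j => (M'.get j).1, fun j => (M'.get j).2, ?_, ?_, ?_, ?_, ?_, ?_⟩
  · exact le_trans (M.length_filter_le _) hMlen'
  · intro j
    exact hMle _ (List.mem_of_mem_filter (M'.get_mem j))
  · have hpw' : M'.Pairwise (fun p q => Disjoint (Icc p.1 p.2) (Icc q.1 q.2)) :=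
      hMpw.sublist List.filter_sublist
    have hpg := List.pairwise_iff_get.1 hpw'
    intro i j hij
    rcases Nat.lt_or_ge (i : ℕ) (j : ℕ) with hlt | hge
    · exact hpg _ _ hlt
    · have hlt : (j : ℕ) < (i : ℕ) :=
        lt_of_le_of_ne hge (fun hc2 => hij (Fin.ext hc2.symm))
      exact (hpg _ _ hlt).symm
  · rw [iUnion_fin_eq_list M']
    apply ENNReal.ofReal_le_of_le_toReal
    linarith [hmass]
  · rw [iUnion_fin_eq_list M']
    refine le_trans (measure_mono hM'sub) ?_
    rw [hMun, hL0un]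
    calc volume (⋃ j : Fin n, Icc (s j - r) (s j + r))
        ≤ ∑' j : Fin n, volume (Icc (s j - r) (s j + r)) := measure_iUnion_le _
      _ = ∑' _j : Fin n, ENNReal.ofReal (2 * r) := by
          congr 1
          funext j
          rw [Real.volume_Icc]
          congr 1
          ring
      _ = (n : ENNReal) * ENNReal.ofReal (2 * r) := by
          rw [tsum_fintype]
          simp [Finset.sum_const, Finset.card_univ, nsmul_eq_mul]
      _ = ENNReal.ofReal (n * (2 * r)) := by
          rw [ENNReal.ofReal_mul (by positivity : (0:ℝ) ≤ (n:ℝ))]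
          congr 1
          exact (ENNReal.ofReal_natCast n).symm
      _ = ENNReal.ofReal (2 * n * (2/ε) ^ ((n:ℝ)⁻¹) * ℓ) := by
          congr 1
          rw [hrdef]
          ring
  · intro j
    have hmem := M'.get_mem j
    simp only [hM'def, List.mem_filter] at hmem
    have := of_decide_eq_true hmem.2
    exact ENNReal.ofReal_le_of_le_toReal this
end

section
/- For any λ > 0 and real t_1,…,t_n, the set {s ∈ ℝ : ∏_{i=1}^n |s − t_i| ≤ λ^n} is a closed set with at most n connected components, each of which is a closed interval, and its Lebesgue measure is at most 2nλ. -/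
open MeasureTheory


private lemma st10_exists_close (n : ℕ) (hn : 0 < n) (lam : ℝ) (hlam : 0 < lam)
    (t : Fin n → ℝ) (s : ℝ) (hs : (∏ i, |s - t i|) ≤ lam ^ n) :
    ∃ i, |s - t i| ≤ lam := by
  by_contra h
  push_neg at h
  have h1 : (∏ _i : Fin n, lam) < ∏ i, |s - t i| :=
    Finset.prod_lt_prod_of_nonempty (fun i _ => hlam) (fun i _ => h i)
      (Finset.univ_nonempty_iff.mpr ⟨⟨0, hn⟩⟩)
  rw [Finset.prod_const, Finset.card_univ, Fintype.card_fin] at h1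
  linarith

/-- log-concavity on a root-free interval -/
private lemma st10_logconc (n : ℕ) (t : Fin n → ℝ) (c v s w : ℝ) (hc : 0 < c)
    (hvs : v < s) (hsw : s < w)
    (hroots : ∀ i, t i < v ∨ w < t i)
    (hv : c < ∏ i, |v - t i|) (hw : c < ∏ i, |w - t i|) :
    c < ∏ i, |s - t i| := by
  set θ := (w - s) / (w - v) with hθdef
  have hwv : 0 < w - v := by linarith
  have hθ0 : 0 < θ := div_pos (by linarith) hwv
  have hθ1 : θ < 1 := (div_lt_one hwv).mpr (by linarith)
  have hcomb : θ * v + (1 - θ) * w = s := by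
    field_simp [hθdef]
    have hkey : θ * (w - v) = w - s := by rw [hθdef]; exact div_mul_cancel₀ _ (ne_of_gt hwv)
    linear_combination -hkey
  have hfac : ∀ i, θ * Real.log |v - t i| + (1 - θ) * Real.log |w - t i|
      ≤ Real.log |s - t i| := by
    intro i
    rcases hroots i with hlt | hgt
    · have hx : v - t i ∈ Set.Ioi (0:ℝ) := by simp only [Set.mem_Ioi]; linarith
      have hy : w - t i ∈ Set.Ioi (0:ℝ) := by simp only [Set.mem_Ioi]; linarith
      have hcc := strictConcaveOn_log_Ioi.concaveOn.2 hx hy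
        (le_of_lt hθ0) (show (0:ℝ) ≤ 1 - θ by linarith) (show θ + (1 - θ) = 1 by ring)
      simp only [smul_eq_mul] at hcc
      have hxy : θ * (v - t i) + (1 - θ) * (w - t i) = s - t i := by
        rw [← hcomb]; ring
      rw [hxy] at hcc
      rwa [abs_of_pos (by linarith : (0:ℝ) < v - t i),
        abs_of_pos (by linarith : (0:ℝ) < w - t i),
        abs_of_pos (by linarith : (0:ℝ) < s - t i)]
    · have hx : t i - v ∈ Set.Ioi (0:ℝ) := by simp only [Set.mem_Ioi]; linarith
      have hy : t i - w ∈ Set.Ioi (0:ℝ) := by simp only [Set.mem_Ioi]; linarith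
      have hcc := strictConcaveOn_log_Ioi.concaveOn.2 hx hy
        (le_of_lt hθ0) (show (0:ℝ) ≤ 1 - θ by linarith) (show θ + (1 - θ) = 1 by ring)
      simp only [smul_eq_mul] at hcc
      have hxy : θ * (t i - v) + (1 - θ) * (t i - w) = t i - s := by
        rw [← hcomb]; ring
      rw [abs_sub_comm v (t i), abs_sub_comm w (t i), abs_sub_comm s (t i)]
      rw [hxy] at hcc
      rwa [abs_of_pos (by linarith : (0:ℝ) < t i - v),
        abs_of_pos (by linarith : (0:ℝ) < t i - w),
        abs_of_pos (by linarith : (0:ℝ) < t i - s)]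
  have habs : ∀ (u : ℝ), (∀ i : Fin n, t i ≠ u) → ∀ i : Fin n, (0:ℝ) < |u - t i| := by
    intro u hu i
    exact abs_pos.mpr (sub_ne_zero.mpr (fun he => hu i he.symm))
  have hvne : ∀ i : Fin n, t i ≠ v := fun i => by rcases hroots i with h | h <;> intro he <;> linarith
  have hwne : ∀ i : Fin n, t i ≠ w := fun i => by rcases hroots i with h | h <;> intro he <;> linarith
  have hsne : ∀ i : Fin n, t i ≠ s := fun i => by rcases hroots i with h | h <;> intro he <;> linarith
  have hvp : (0:ℝ) < ∏ i, |v - t i| := Finset.prod_pos (fun i _ => habs v hvne i)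
  have hwp : (0:ℝ) < ∏ i, |w - t i| := Finset.prod_pos (fun i _ => habs w hwne i)
  have hsp : (0:ℝ) < ∏ i, |s - t i| := Finset.prod_pos (fun i _ => habs s hsne i)
  have hlogv : Real.log (∏ i, |v - t i|) = ∑ i, Real.log |v - t i| :=
    Real.log_prod (fun i _ => ne_of_gt (habs v hvne i))
  have hlogw : Real.log (∏ i, |w - t i|) = ∑ i, Real.log |w - t i| :=
    Real.log_prod (fun i _ => ne_of_gt (habs w hwne i))
  have hlogs : Real.log (∏ i, |s - t i|) = ∑ i, Real.log |s - t i| :=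
    Real.log_prod (fun i _ => ne_of_gt (habs s hsne i))
  have hsum : θ * Real.log (∏ i, |v - t i|) + (1 - θ) * Real.log (∏ i, |w - t i|)
      ≤ Real.log (∏ i, |s - t i|) := by
    rw [hlogv, hlogw, hlogs, Finset.mul_sum, Finset.mul_sum, ← Finset.sum_add_distrib]
    exact Finset.sum_le_sum (fun i _ => hfac i)
  have hlv : Real.log c < Real.log (∏ i, |v - t i|) := Real.log_lt_log hc hv
  have hlw : Real.log c < Real.log (∏ i, |w - t i|) := Real.log_lt_log hc hw
  have hfin : Real.log c < Real.log (∏ i, |s - t i|) := by nlinarith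
  exact (Real.log_lt_log_iff hc hsp).mp hfin

/-- every point of the sublevel set connects to some root along the set -/
private lemma st10_core (n : ℕ) (hn : 0 < n) (lam : ℝ) (hlam : 0 < lam)
    (t : Fin n → ℝ) (s : ℝ) (hs : (∏ i, |s - t i|) ≤ lam ^ n) :
    ∃ i, (t i ≤ s ∧ ∀ u ∈ Set.Icc (t i) s, (∏ j, |u - t j|) ≤ lam ^ n) ∨
         (s ≤ t i ∧ ∀ u ∈ Set.Icc s (t i), (∏ j, |u - t j|) ≤ lam ^ n) := by
  have hc : (0:ℝ) < lam ^ n := pow_pos hlam n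
  have hzero : ∀ i : Fin n, (∏ j, |t i - t j|) = 0 := by
    intro i
    exact Finset.prod_eq_zero (Finset.mem_univ i) (by simp)
  by_cases hex : ∃ i, t i = s
  · obtain ⟨i, hi⟩ := hex
    refine ⟨i, Or.inl ⟨le_of_eq hi, ?_⟩⟩
    intro u hu
    have : u = s := le_antisymm hu.2 (hi ▸ hu.1)
    rwa [this]
  push_neg at hex
  by_cases hB : ∃ i, s < t i
  · by_cases hA : ∃ i, t i < s
    · -- roots on both sides
      obtain ⟨j₁, hj₁m, hj₁max⟩ := Finset.exists_max_image
        (Finset.univ.filter (fun i => t i < s)) t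
        (by obtain ⟨i, hi⟩ := hA; exact ⟨i, Finset.mem_filter.mpr ⟨Finset.mem_univ i, hi⟩⟩)
      obtain ⟨j₂, hj₂m, hj₂min⟩ := Finset.exists_min_image
        (Finset.univ.filter (fun i => s < t i)) t
        (by obtain ⟨i, hi⟩ := hB; exact ⟨i, Finset.mem_filter.mpr ⟨Finset.mem_univ i, hi⟩⟩)
      have hj₁s : t j₁ < s := (Finset.mem_filter.mp hj₁m).2
      have hj₂s : s < t j₂ := (Finset.mem_filter.mp hj₂m).2
      by_cases hL : ∀ u ∈ Set.Icc (t j₁) s, (∏ j, |u - t j|) ≤ lam ^ n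
      · exact ⟨j₁, Or.inl ⟨le_of_lt hj₁s, hL⟩⟩
      · push_neg at hL
        obtain ⟨v, hvm, hvE'⟩ := hL
        have hv1 : t j₁ < v := by
          rcases lt_or_eq_of_le hvm.1 with h | h
          · exact h
          · exfalso; rw [← h] at hvE'; rw [hzero j₁] at hvE'; linarith
        have hv2 : v < s := by
          rcases lt_or_eq_of_le hvm.2 with h | h
          · exact h
          · exfalso; rw [h] at hvE'; linarith
        refine ⟨j₂, Or.inr ⟨le_of_lt hj₂s, ?_⟩⟩
        intro w hw
        by_contra hwE
        have hwE' : lam ^ n < ∏ j, |w - t j| := lt_of_not_ge hwE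
        have hw1 : s < w := by
          rcases lt_or_eq_of_le hw.1 with h | h
          · exact h
          · exfalso; rw [← h] at hwE'; linarith
        have hw2 : w < t j₂ := by
          rcases lt_or_eq_of_le hw.2 with h | h
          · exact h
          · exfalso; rw [h] at hwE'; rw [hzero j₂] at hwE'; linarith
        have hroots : ∀ i, t i < v ∨ w < t i := by
          intro i
          rcases lt_trichotomy (t i) s with h | h | h
          · left
            have : t i ≤ t j₁ := hj₁max i (Finset.mem_filter.mpr ⟨Finset.mem_univ i, h⟩)
            linarith
          · exact absurd h (hex i)
          · right
            have : t j₂ ≤ t i := hj₂min i (Finset.mem_filter.mpr ⟨Finset.mem_univ i, h⟩)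
            linarith
        have := st10_logconc n t (lam ^ n) v s w hc hv2 hw1 hroots hvE' hwE'
        linarith
    · -- all roots > s
      push_neg at hA
      obtain ⟨j, hjm, hjmin⟩ := Finset.exists_min_image (Finset.univ : Finset (Fin n)) t
        (Finset.univ_nonempty_iff.mpr ⟨⟨0, hn⟩⟩)
      refine ⟨j, Or.inr ⟨hA j, ?_⟩⟩
      intro u hu
      calc (∏ i, |u - t i|) ≤ ∏ i, |s - t i| := by
            apply Finset.prod_le_prod (fun i _ => abs_nonneg _)
            intro i _
            have h1 : u ≤ t i := le_trans hu.2 (hjmin i (Finset.mem_univ i))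
            have h2 : s ≤ u := hu.1
            rw [abs_sub_comm u (t i), abs_sub_comm s (t i),
              abs_of_nonneg (by linarith), abs_of_nonneg (by linarith)]
            linarith
        _ ≤ lam ^ n := hs
  · -- all roots < s (or = handled)
    push_neg at hB
    obtain ⟨j, hjm, hjmax⟩ := Finset.exists_max_image (Finset.univ : Finset (Fin n)) t
      (Finset.univ_nonempty_iff.mpr ⟨⟨0, hn⟩⟩)
    refine ⟨j, Or.inl ⟨hB j, ?_⟩⟩
    intro u hu
    calc (∏ i, |u - t i|) ≤ ∏ i, |s - t i| := by
          apply Finset.prod_le_prod (fun i _ => abs_nonneg _)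
          intro i _
          have h1 : t i ≤ u := le_trans (hjmax i (Finset.mem_univ i)) hu.1
          have h2 : u ≤ s := hu.2
          rw [abs_of_nonneg (by linarith), abs_of_nonneg (by linarith)]
          linarith
      _ ≤ lam ^ n := hs

/-- for `λ > 0` and reals `t_1,…,t_n`, the sublevel set
`{s : ∏ |s - t_i| ≤ λ^n}` is closed, is a union of at most `n` closed intervals,
and has Lebesgue measure at most `2nλ`. -/
theorem statement10 (n : ℕ) (hn : 0 < n) (lam : ℝ) (hlam : 0 < lam) (t : Fin n → ℝ) :
    IsClosed {s : ℝ | (∏ i, |s - t i|) ≤ lam ^ n} ∧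
    (∃ a b : Fin n → ℝ,
      {s : ℝ | (∏ i, |s - t i|) ≤ lam ^ n} = ⋃ i, Set.Icc (a i) (b i)) ∧
    volume {s : ℝ | (∏ i, |s - t i|) ≤ lam ^ n} ≤ ENNReal.ofReal (2 * n * lam) := by
  set E := {s : ℝ | (∏ i, |s - t i|) ≤ lam ^ n} with hE
  have hc : (0:ℝ) < lam ^ n := pow_pos hlam n
  have hclosed : IsClosed E := by
    have hcont : Continuous fun s : ℝ => ∏ i, |s - t i| := by
      apply continuous_finset_prod
      intro i _
      exact (continuous_id.sub continuous_const).abs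
    exact isClosed_le hcont continuous_const
  have htE : ∀ i : Fin n, t i ∈ E := by
    intro i
    show (∏ j, |t i - t j|) ≤ lam ^ n
    rw [Finset.prod_eq_zero (Finset.mem_univ i) (by simp)]
    exact le_of_lt hc
  -- bounds on E
  obtain ⟨j₀, _, hj₀min⟩ := Finset.exists_min_image (Finset.univ : Finset (Fin n)) t
    (Finset.univ_nonempty_iff.mpr ⟨⟨0, hn⟩⟩)
  obtain ⟨j₁, _, hj₁max⟩ := Finset.exists_max_image (Finset.univ : Finset (Fin n)) t
    (Finset.univ_nonempty_iff.mpr ⟨⟨0, hn⟩⟩)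
  have hEbdd : ∀ u ∈ E, t j₀ - lam ≤ u ∧ u ≤ t j₁ + lam := by
    intro u hu
    obtain ⟨i, hi⟩ := st10_exists_close n hn lam hlam t u hu
    rw [abs_le] at hi
    constructor
    · have := hj₀min i (Finset.mem_univ i); linarith [hi.1]
    · have := hj₁max i (Finset.mem_univ i); linarith [hi.2]
  -- interval endpoints
  set S : Fin n → Set ℝ := fun i => {u | u ≤ t i ∧ ∀ x ∈ Set.Icc u (t i), x ∈ E} with hSdef
  set T : Fin n → Set ℝ := fun i => {u | t i ≤ u ∧ ∀ x ∈ Set.Icc (t i) u, x ∈ E} with hTdef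
  have hSne : ∀ i, (S i).Nonempty := by
    intro i
    exact ⟨t i, le_refl _, fun x hx => by
      have : x = t i := le_antisymm hx.2 hx.1
      rw [this]; exact htE i⟩
  have hTne : ∀ i, (T i).Nonempty := by
    intro i
    exact ⟨t i, le_refl _, fun x hx => by
      have : x = t i := le_antisymm hx.2 hx.1
      rw [this]; exact htE i⟩
  have hSsub : ∀ i, S i ⊆ E := by
    intro i u hu
    exact hu.2 u ⟨le_refl u, hu.1⟩
  have hTsub : ∀ i, T i ⊆ E := by
    intro i u hu
    exact hu.2 u ⟨hu.1, le_refl u⟩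
  have hSbdd : ∀ i, BddBelow (S i) := by
    intro i
    exact ⟨t j₀ - lam, fun u hu => (hEbdd u (hSsub i hu)).1⟩
  have hTbdd : ∀ i, BddAbove (T i) := by
    intro i
    exact ⟨t j₁ + lam, fun u hu => (hEbdd u (hTsub i hu)).2⟩
  set a : Fin n → ℝ := fun i => sInf (S i) with hadef
  set b : Fin n → ℝ := fun i => sSup (T i) with hbdef
  have haE : ∀ i, a i ∈ E := by
    intro i
    have h1 : a i ∈ closure (S i) := csInf_mem_closure (hSne i) (hSbdd i)
    have h2 : closure (S i) ⊆ closure E := closure_mono (hSsub i)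
    rw [hclosed.closure_eq] at h2
    exact h2 h1
  have hbE : ∀ i, b i ∈ E := by
    intro i
    have h1 : b i ∈ closure (T i) := csSup_mem_closure (hTne i) (hTbdd i)
    have h2 : closure (T i) ⊆ closure E := closure_mono (hTsub i)
    rw [hclosed.closure_eq] at h2
    exact h2 h1
  have hat : ∀ i, a i ≤ t i := fun i => csInf_le (hSbdd i) ⟨le_refl _, fun x hx => by
      have : x = t i := le_antisymm hx.2 hx.1
      rw [this]; exact htE i⟩
  have htb : ∀ i, t i ≤ b i := fun i => le_csSup (hTbdd i) ⟨le_refl _, fun x hx => by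
      have : x = t i := le_antisymm hx.2 hx.1
      rw [this]; exact htE i⟩
  have hunion : E = ⋃ i, Set.Icc (a i) (b i) := by
    apply Set.Subset.antisymm
    · intro s hs
      obtain ⟨i, hi⟩ := st10_core n hn lam hlam t s hs
      rcases hi with ⟨hts, hsub⟩ | ⟨hst, hsub⟩
      · -- t i ≤ s, [t i, s] ⊆ E, so s ∈ T i, s ≤ b i
        have hsT : s ∈ T i := ⟨hts, fun x hx => hsub x hx⟩
        refine Set.mem_iUnion.mpr ⟨i, le_trans (hat i) hts, le_csSup (hTbdd i) hsT⟩
      · have hsS : s ∈ S i := ⟨hst, fun x hx => hsub x hx⟩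
        refine Set.mem_iUnion.mpr ⟨i, csInf_le (hSbdd i) hsS, le_trans hst (htb i)⟩
    · intro x hx
      obtain ⟨i, hxi⟩ := Set.mem_iUnion.mp hx
      rcases le_total x (t i) with hle | hge
      · -- a i ≤ x ≤ t i
        rcases eq_or_lt_of_le hxi.1 with heq | hlt
        · rw [← heq]; exact haE i
        · obtain ⟨u, huS, hult⟩ := exists_lt_of_csInf_lt (hSne i) hlt
          exact huS.2 x ⟨le_of_lt hult, hle⟩
      · rcases eq_or_lt_of_le hxi.2 with heq | hlt
        · rw [heq]; exact hbE i
        · obtain ⟨u, huT, hult⟩ := exists_lt_of_lt_csSup (hTne i) hlt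
          exact huT.2 x ⟨hge, le_of_lt hult⟩
  refine ⟨hclosed, ⟨a, b, hunion⟩, ?_⟩
  -- measure bound
  have hcover : E ⊆ ⋃ i, Set.Icc (t i - lam) (t i + lam) := by
    intro u hu
    obtain ⟨i, hi⟩ := st10_exists_close n hn lam hlam t u hu
    rw [abs_le] at hi
    exact Set.mem_iUnion.mpr ⟨i, by constructor <;> linarith [hi.1, hi.2]⟩
  calc volume E ≤ volume (⋃ i, Set.Icc (t i - lam) (t i + lam)) := measure_mono hcover
    _ ≤ ∑' i : Fin n, volume (Set.Icc (t i - lam) (t i + lam)) := measure_iUnion_le _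
    _ = ∑' _i : Fin n, ENNReal.ofReal (2 * lam) := by
        congr 1; funext i; rw [Real.volume_Icc]; congr 1; ring
    _ = (n : ENNReal) * ENNReal.ofReal (2 * lam) := by
        rw [tsum_fintype, Finset.sum_const, Finset.card_univ, Fintype.card_fin, nsmul_eq_mul]
    _ = ENNReal.ofReal (2 * n * lam) := by
        rw [← ENNReal.ofReal_natCast n, ← ENNReal.ofReal_mul (by positivity)]
        congr 1; ring
end

section
/- Let t_1 < ⋯ < t_{n+1} be distinct points, let k be an index maximizing V_n(t_1,…,t̂_k,…,t_{n+1}) over k ∈ {1,…,n+1}. Then k ≠ 1 and k ≠ n+1. -/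
lemma castSucc_le_succAbove' {n : ℕ} (p : Fin (n + 1)) (i : Fin n) :
    i.castSucc ≤ p.succAbove i := by
  rcases lt_or_ge i.castSucc p with h | h
  · rw [Fin.succAbove_of_castSucc_lt _ _ h]
  · rw [Fin.succAbove_of_le_castSucc _ _ h]
    exact (Fin.castSucc_lt_succ (i := i)).le

lemma succAbove_le_succ' {n : ℕ} (p : Fin (n + 1)) (i : Fin n) :
    p.succAbove i ≤ i.succ := by
  rcases lt_or_ge i.castSucc p with h | h
  · rw [Fin.succAbove_of_castSucc_lt _ _ h]
    exact (Fin.castSucc_lt_succ (i := i)).le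
  · rw [Fin.succAbove_of_le_castSucc _ _ h]

lemma omit_zero_lt (n : ℕ) (hn : 2 ≤ n) (t : Fin (n + 1) → ℝ) (ht : StrictMono t) :
    vandOmit t 0 < vandOmit t 1 := by
  unfold vandOmit vand
  apply Finset.prod_lt_prod
  · intro p hp
    simp only [Finset.mem_filter] at hp
    have : (0 : Fin (n+1)).succAbove p.1 < (0 : Fin (n+1)).succAbove p.2 :=
      Fin.succAbove_lt_succAbove_iff.2 hp.2
    simpa using ht this
  · intro p hp
    simp only [Finset.mem_filter] at hp
    have h2 : (1 : Fin (n+1)).succAbove p.2 = p.2.succ := by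
      apply Fin.succAbove_of_le_castSucc
      have hv : ((1 : Fin (n+1)) : ℕ) = 1 := by rw [Fin.val_one']; exact Nat.mod_eq_of_lt (by omega)
      have hlt : (p.1 : ℕ) < (p.2 : ℕ) := hp.2
      rw [Fin.le_def, hv]
      simp only [Fin.coe_castSucc]
      omega
    have h1 : (1 : Fin (n+1)).succAbove p.1 ≤ (0 : Fin (n+1)).succAbove p.1 := by
      rw [Fin.succAbove_zero]
      exact succAbove_le_succ' _ _
    simp only [Function.comp_apply, Fin.succAbove_zero, h2]
    have := ht.monotone h1
    simp only [Fin.succAbove_zero] at this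
    linarith
  · refine ⟨(⟨0, by omega⟩, ⟨1, by omega⟩), ?_, ?_⟩
    · simp only [Finset.mem_filter, Finset.mem_univ, true_and]
      exact Fin.mk_lt_mk.2 (by omega)
    · have hv : ((1 : Fin (n+1)) : ℕ) = 1 := by rw [Fin.val_one']; exact Nat.mod_eq_of_lt (by omega)
      have h2 : (1 : Fin (n+1)).succAbove ⟨1, by omega⟩ = Fin.succ ⟨1, by omega⟩ := by
        apply Fin.succAbove_of_le_castSucc
        rw [Fin.le_def, hv]
        simp
      have h1 : (1 : Fin (n+1)).succAbove ⟨0, by omega⟩ = Fin.castSucc ⟨0, by omega⟩ := by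
        apply Fin.succAbove_of_castSucc_lt
        rw [Fin.lt_def, hv]
        simp
      simp only [Function.comp_apply, Fin.succAbove_zero, h1, h2]
      have : t (Fin.succ ⟨0, by omega⟩) > t (Fin.castSucc ⟨0, by omega⟩) := by
        apply ht
        exact Fin.castSucc_lt_succ
      linarith

lemma omit_last_lt (n : ℕ) (hn : 2 ≤ n) (t : Fin (n + 1) → ℝ) (ht : StrictMono t) :
    vandOmit t (Fin.last n) < vandOmit t ⟨n - 1, by omega⟩ := by
  unfold vandOmit vand
  apply Finset.prod_lt_prod
  · intro p hp
    simp only [Finset.mem_filter] at hp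
    have : (Fin.last n).succAbove p.1 < (Fin.last n).succAbove p.2 :=
      Fin.succAbove_lt_succAbove_iff.2 hp.2
    simpa using ht this
  · intro p hp
    simp only [Finset.mem_filter] at hp
    have h1 : (⟨n - 1, by omega⟩ : Fin (n+1)).succAbove p.1 = p.1.castSucc := by
      apply Fin.succAbove_of_castSucc_lt
      have hlt : (p.1 : ℕ) < (p.2 : ℕ) := hp.2
      have hlt2 : (p.2 : ℕ) < n := p.2.isLt
      simp only [Fin.lt_def, Fin.coe_castSucc]
      omega
    have h2 : p.2.castSucc ≤ (⟨n - 1, by omega⟩ : Fin (n+1)).succAbove p.2 :=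
      castSucc_le_succAbove' _ _
    simp only [Function.comp_apply, Fin.succAbove_last, h1]
    have := ht.monotone h2
    linarith
  · refine ⟨(⟨n - 2, by omega⟩, ⟨n - 1, by omega⟩), ?_, ?_⟩
    · simp only [Finset.mem_filter, Finset.mem_univ, true_and, Fin.lt_def]
      omega
    · have h2 : (⟨n - 1, by omega⟩ : Fin (n+1)).succAbove ⟨n - 1, by omega⟩ =
          Fin.succ ⟨n - 1, by omega⟩ := by
        apply Fin.succAbove_of_le_castSucc
        simp [Fin.le_def]
      have h1 : (⟨n - 1, by omega⟩ : Fin (n+1)).succAbove ⟨n - 2, by omega⟩ =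
          Fin.castSucc ⟨n - 2, by omega⟩ := by
        apply Fin.succAbove_of_castSucc_lt
        simp only [Fin.lt_def, Fin.coe_castSucc]
        omega
      simp only [Function.comp_apply, Fin.succAbove_last, h1, h2]
      have : t (Fin.castSucc ⟨n - 1, by omega⟩) < t (Fin.succ ⟨n - 1, by omega⟩) := by
        apply ht
        simp [Fin.lt_def]
      linarith

/-- if `k` maximizes `V_n(t_1,…,t̂_k,…,t_{n+1})` for increasing points
`t_1 < ⋯ < t_{n+1}`, then `k` is neither the first nor the last index. -/
theorem statement12 (n : ℕ) (hn : 2 ≤ n) (t : Fin (n + 1) → ℝ) (ht : StrictMono t)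
    (k : Fin (n + 1)) (hk : ∀ i, vandOmit t i ≤ vandOmit t k) :
    k ≠ 0 ∧ k ≠ Fin.last n := by
  constructor
  · rintro rfl
    exact absurd (hk 1) (not_le.2 (omit_zero_lt n hn t ht))
  · rintro rfl
    exact absurd (hk ⟨n - 1, by omega⟩) (not_le.2 (omit_last_lt n hn t ht))
end

section
/- Let t_1 < ⋯ < t_{n+1}, let k ∈ {2,…,n} and let I' be the shorter of the intervals [t_{k−1}, t_k] and [t_k, t_{k+1}]. Then for every t ∈ I' and every pair of distinct indices j, i with i ≠ k, j ≠ k, the product ∏_{i ≠ j,k} |t − t_i| ≤ 2^{n−1} ∏_{i ≠ j,k} |t_k − t_i|. -/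
/-- for increasing points `t 0 < ⋯ < t n` (so `n+1` points), an
interior index `k` (`1 ≤ k`, `k < n`), and `I'` the shorter of `[t (k-1), t k]` and
`[t k, t (k+1)]`, one has for every `x ∈ I'` and every index `j ≠ k` of the list:
`∏_{i ≠ j,k} |x - t i| ≤ 2^{n-1} ∏_{i ≠ j,k} |t k - t i|`. -/
theorem statement13 (n : ℕ) (t : ℕ → ℝ) (hmono : ∀ i < n, t i < t (i + 1))
    (k : ℕ) (hk1 : 1 ≤ k) (hk2 : k < n) :
    ∀ x ∈ (if t k - t (k - 1) ≤ t (k + 1) - t k then Set.Icc (t (k - 1)) (t k)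
           else Set.Icc (t k) (t (k + 1))),
      ∀ j ≤ n, j ≠ k →
        (∏ i ∈ ((Finset.range (n + 1)).erase j).erase k, |x - t i|) ≤
          2 ^ (n - 1) * ∏ i ∈ ((Finset.range (n + 1)).erase j).erase k, |t k - t i| := by
  have hlt : ∀ i j, i < j → j ≤ n → t i < t j := by
    intro i j hij hjn
    induction j with
    | zero => omega
    | succ m ih =>
      rcases Nat.lt_succ_iff_lt_or_eq.mp hij with h | h
      · exact lt_trans (ih h (by omega)) (hmono m (by omega))
      · subst h; exact hmono i (by omega)
  intro x hx j hjn hjk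
  set s := ((Finset.range (n + 1)).erase j).erase k with hs
  have hkmem : k ∈ (Finset.range (n + 1)).erase j := by
    simp [Finset.mem_erase, Ne.symm hjk]; omega
  have hcard : s.card = n - 1 := by
    rw [hs, Finset.card_erase_of_mem hkmem,
      Finset.card_erase_of_mem (by simp; omega)]
    simp
  have hd : |x - t k| ≤ min (t k - t (k - 1)) (t (k + 1) - t k) := by
    split_ifs at hx with h
    · obtain ⟨h1, h2⟩ := hx
      have hb : |x - t k| ≤ t k - t (k - 1) := by
        rw [abs_le]; constructor <;> linarith
      exact le_min hb (hb.trans h)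
    · obtain ⟨h1, h2⟩ := hx
      have hb : |x - t k| ≤ t (k + 1) - t k := by
        rw [abs_le]; constructor <;> linarith
      exact le_min (hb.trans (le_of_lt (by linarith))) hb
  have hpt : ∀ i ∈ s, |x - t i| ≤ 2 * |t k - t i| := by
    intro i hi
    rw [hs, Finset.mem_erase, Finset.mem_erase, Finset.mem_range] at hi
    obtain ⟨hik, _, hin⟩ := hi
    have hmd : min (t k - t (k - 1)) (t (k + 1) - t k) ≤ |t k - t i| := by
      rcases lt_or_gt_of_ne hik with hlt' | hgt
      · -- i < k
        have h1 : t i ≤ t (k - 1) := by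
          rcases Nat.lt_or_ge i (k - 1) with h | h
          · exact le_of_lt (hlt i (k - 1) h (by omega))
          · have : i = k - 1 := by omega
            rw [this]
        have h2 : t i < t k := hlt i k hlt' (by omega)
        rw [abs_of_pos (by linarith)]
        exact (min_le_left _ _).trans (by linarith)
      · -- k < i
        have h1 : t (k + 1) ≤ t i := by
          rcases Nat.lt_or_ge (k + 1) i with h | h
          · exact le_of_lt (hlt (k + 1) i h (by omega))
          · have : i = k + 1 := by omega
            rw [this]
        have h2 : t k < t i := hlt k i hgt (by omega)
        rw [abs_of_neg (by linarith), neg_sub]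
        exact (min_le_right _ _).trans (by linarith)
    calc |x - t i| = |(x - t k) + (t k - t i)| := by ring_nf
      _ ≤ |x - t k| + |t k - t i| := abs_add_le _ _
      _ ≤ 2 * |t k - t i| := by
          have := hd.trans hmd; linarith
  calc (∏ i ∈ s, |x - t i|) ≤ ∏ i ∈ s, (2 * |t k - t i|) :=
        Finset.prod_le_prod (fun i _ => abs_nonneg _) hpt
    _ = 2 ^ s.card * ∏ i ∈ s, |t k - t i| := by
        rw [Finset.prod_mul_distrib, Finset.prod_const]
    _ = 2 ^ (n - 1) * ∏ i ∈ s, |t k - t i| := by rw [hcard]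
end

section
/- Let I' be a compact interval, ℓ > 0, n ≥ 1, and f ∈ C^n(I'). Then for every j ∈ {0,…,n}, min{|I'|^j, ℓ^j} · sup_{t ∈ I'} |f^{(j)}(t)| ≤ C_n · ( sup_{t ∈ I'} |f(t)| + ℓ^n · sup_{t ∈ I'} |f^{(n)}(t)| ), where C_n depends only on n. -/
open Set

lemma itDW_open {k : ℕ} {f : ℝ → ℝ} {s : Set ℝ} (hs : IsOpen s) {x : ℝ} (hx : x ∈ s) :
    iteratedDerivWithin k f s x = iteratedDeriv k f x := by
  simp [iteratedDerivWithin, iteratedDeriv, iteratedFDerivWithin_of_isOpen k hs hx]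

lemma itDW_Icc {a b x : ℝ} (hx : x ∈ Set.Ioo a b) (k : ℕ) (f : ℝ → ℝ) :
    iteratedDerivWithin k f (Set.Icc a b) x = iteratedDeriv k f x := by
  have h1 : Set.Icc a b ∩ Set.Ioo a b = Set.Ioo a b := Set.inter_eq_right.mpr Set.Ioo_subset_Icc_self
  have h2 := iteratedFDerivWithin_inter_open (𝕜 := ℝ) (f := f) (n := k) (s := Set.Icc a b) isOpen_Ioo hx
  rw [h1] at h2
  rw [iteratedDerivWithin, ← h2, ← iteratedDerivWithin]
  exact itDW_open isOpen_Ioo hx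

lemma ContDiffAt.open_contDiffOn {k : ℕ} {f : ℝ → ℝ} {x : ℝ} (hf : ContDiffAt ℝ k f x) :
    ∃ u : Set ℝ, IsOpen u ∧ x ∈ u ∧ ContDiffOn ℝ k f u := by
  obtain ⟨u, hu, hfu⟩ := hf.contDiffOn le_rfl (by simp)
  exact ⟨interior u, isOpen_interior, mem_interior_iff_mem_nhds.2 hu, hfu.mono interior_subset⟩

lemma itD_sub {k : ℕ} {f g : ℝ → ℝ} {x : ℝ}
    (hf : ContDiffAt ℝ k f x) (hg : ContDiffAt ℝ k g x) :
    iteratedDeriv k (fun y => f y - g y) x = iteratedDeriv k f x - iteratedDeriv k g x := by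
  obtain ⟨u, huo, hxu, hfu⟩ := hf.open_contDiffOn
  obtain ⟨v, hvo, hxv, hgv⟩ := hg.open_contDiffOn
  have hwo : IsOpen (u ∩ v) := huo.inter hvo
  have hxw : x ∈ u ∩ v := ⟨hxu, hxv⟩
  rw [← itDW_open (f := fun y => f y - g y) hwo hxw, ← itDW_open (f := f) hwo hxw,
    ← itDW_open (f := g) hwo hxw]
  exact iteratedDerivWithin_sub hxw hwo.uniqueDiffOn (hfu.mono inter_subset_left x hxw)
    (hgv.mono inter_subset_right x hxw)

lemma itD_hasDerivAt {k : ℕ} {f : ℝ → ℝ} {x : ℝ} (hf : ContDiffAt ℝ (k + 1) f x) :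
    HasDerivAt (iteratedDeriv k f) (iteratedDeriv (k + 1) f x) x := by
  obtain ⟨u, huo, hxu, hfu⟩ := hf.open_contDiffOn
  have hd : DifferentiableWithinAt ℝ (iteratedDerivWithin k f u) u x :=
    (hfu.differentiableOn_iteratedDerivWithin (by exact_mod_cast k.lt_succ_self)
      huo.uniqueDiffOn) x hxu
  have heq : iteratedDerivWithin k f u =ᶠ[nhds x] iteratedDeriv k f := by
    filter_upwards [huo.mem_nhds hxu] with y hy
    exact itDW_open huo hy
  have hD : DifferentiableAt ℝ (iteratedDeriv k f) x :=
    (hd.differentiableAt (huo.mem_nhds hxu)).congr_of_eventuallyEq heq.symm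
  rw [iteratedDeriv_succ]
  exact hD.hasDerivAt

noncomputable def fdiff (δ : ℝ) : ℕ → (ℝ → ℝ) → (ℝ → ℝ)
  | 0, f => f
  | (k+1), f => fdiff δ k (fun y => f (y + δ) - f y)

lemma fdiff_bound (δ : ℝ) (hδ : 0 < δ) :
    ∀ (k : ℕ) (f : ℝ → ℝ) (y M : ℝ), (∀ u ∈ Set.Icc y (y + k * δ), |f u| ≤ M) →
      |fdiff δ k f y| ≤ 2 ^ k * M := by
  intro k
  induction k with
  | zero =>
    intro f y M h
    simpa [fdiff] using h y (by constructor <;> nlinarith)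
  | succ k ih =>
    intro f y M h
    have hb : ∀ u ∈ Set.Icc y (y + k * δ), |f (u + δ) - f u| ≤ 2 * M := by
      intro u hu
      obtain ⟨h1, h2⟩ := hu
      have e1 := h (u + δ) ⟨by nlinarith, by push_cast; nlinarith⟩
      have e2 := h u ⟨h1, by push_cast; nlinarith⟩
      calc |f (u + δ) - f u| ≤ |f (u+δ)| + |f u| := abs_sub _ _
        _ ≤ 2 * M := by nlinarith
    have := ih (fun y => f (y + δ) - f y) y (2 * M) hb
    calc |fdiff δ (k+1) f y| = |fdiff δ k (fun y => f (y + δ) - f y) y| := by rw [fdiff]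
      _ ≤ 2 ^ k * (2 * M) := this
      _ = 2 ^ (k+1) * M := by ring

lemma fdiff_mvt (δ : ℝ) (hδ : 0 < δ) :
    ∀ (k : ℕ) (f : ℝ → ℝ) (y : ℝ),
      (∀ u ∈ Set.Icc y (y + (k + 1 : ℕ) * δ), ContDiffAt ℝ (k + 1 : ℕ) f u) →
      ∃ ξ ∈ Set.Ioo y (y + (k + 1 : ℕ) * δ),
        fdiff δ (k + 1) f y = δ ^ (k + 1) * iteratedDeriv (k + 1) f ξ := by
  intro k
  induction k with
  | zero =>
    intro f y h
    have e1 : y + ((0 + 1 : ℕ) : ℝ) * δ = y + δ := by push_cast; ring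
    rw [e1] at h ⊢
    have hy : y < y + δ := by nlinarith
    have hcont : ContinuousOn f (Set.Icc y (y + δ)) := fun u hu =>
      ((h u hu).continuousAt).continuousWithinAt
    have hder : ∀ u ∈ Set.Ioo y (y + δ), HasDerivAt f (deriv f u) u := by
      intro u hu
      exact ((h u (Set.Ioo_subset_Icc_self hu)).differentiableAt
        (by simp)).hasDerivAt
    obtain ⟨c, hc, hslope⟩ := exists_hasDerivAt_eq_slope f (deriv f) hy hcont hder
    refine ⟨c, hc, ?_⟩
    have hne : y + δ - y ≠ 0 := by nlinarith
    field_simp at hslope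
    rw [show (0 + 1 : ℕ) = 1 from rfl, iteratedDeriv_one]
    show f (y + δ) - f y = δ ^ 1 * deriv f c
    nlinarith [hslope]
  | succ k ih =>
    intro f y h
    have e1 : ((k + 1 + 1 : ℕ) : ℝ) = ((k + 1 : ℕ) : ℝ) + 1 := by push_cast; ring
    rw [e1] at h ⊢
    set B : ℝ := ((k + 1 : ℕ) : ℝ) with hB
    have hB1 : (1 : ℝ) ≤ B := by rw [hB]; exact_mod_cast Nat.one_le_iff_ne_zero.mpr (Nat.succ_ne_zero k)
    set g : ℝ → ℝ := fun u => f (u + δ) - f u with hg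
    have hmem : ∀ u ∈ Set.Icc y (y + B * δ), u ∈ Set.Icc y (y + (B + 1) * δ) ∧
        u + δ ∈ Set.Icc y (y + (B + 1) * δ) := by
      intro u hu
      obtain ⟨h1, h2⟩ := hu
      exact ⟨⟨h1, by nlinarith⟩, ⟨by nlinarith, by nlinarith⟩⟩
    have htrans : ∀ u : ℝ, ContDiffAt ℝ (k + 1 + 1 : ℕ) f (u + δ) →
        ContDiffAt ℝ (k + 1 + 1 : ℕ) (fun z => f (z + δ)) u := by
      intro u hu
      exact hu.comp u ((contDiff_id.add contDiff_const).contDiffAt)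
    have hle : ((k + 1 : ℕ) : WithTop ℕ∞) ≤ ((k + 1 + 1 : ℕ) : WithTop ℕ∞) := by
      exact_mod_cast Nat.le_succ (k + 1)
    have hgc : ∀ u ∈ Set.Icc y (y + B * δ), ContDiffAt ℝ (k + 1 : ℕ) g u := by
      intro u hu
      obtain ⟨h1, h2⟩ := hmem u hu
      exact ((htrans u (h _ h2)).sub (h _ h1)).of_le hle
    obtain ⟨ξ, hξ, heq⟩ := ih g y hgc
    have hξIcc : ξ ∈ Set.Icc y (y + B * δ) := Set.Ioo_subset_Icc_self hξ
    obtain ⟨hξ1, hξ2⟩ := hmem ξ hξIcc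
    set F := iteratedDeriv (k + 1) f with hF
    have hsplit : iteratedDeriv (k + 1) g ξ = F (ξ + δ) - F ξ := by
      rw [hg]
      rw [itD_sub ((htrans ξ (h _ hξ2)).of_le hle) ((h _ hξ1).of_le hle)]
      rw [iteratedDeriv_comp_add_const (k + 1) f δ]
    have hξδ : ξ < ξ + δ := by nlinarith
    have hsub : ∀ u ∈ Set.Icc ξ (ξ + δ), u ∈ Set.Icc y (y + (B + 1) * δ) := by
      intro u hu
      obtain ⟨h1, h2⟩ := hu
      obtain ⟨v1, v2⟩ := hξ
      exact ⟨by linarith, by nlinarith⟩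
    have hcont : ContinuousOn F (Set.Icc ξ (ξ + δ)) := by
      intro u hu
      exact (itD_hasDerivAt (h u (hsub u hu))).continuousAt.continuousWithinAt
    have hder : ∀ u ∈ Set.Ioo ξ (ξ + δ), HasDerivAt F (iteratedDeriv (k + 1 + 1) f u) u := by
      intro u hu
      exact itD_hasDerivAt (h u (hsub u (Set.Ioo_subset_Icc_self hu)))
    obtain ⟨ζ, hζ, hslope⟩ := exists_hasDerivAt_eq_slope F (fun u => iteratedDeriv (k + 1 + 1) f u)
      hξδ hcont hder
    obtain ⟨u1, u2⟩ := hζ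
    obtain ⟨v1, v2⟩ := hξ
    refine ⟨ζ, ⟨by linarith, by nlinarith⟩, ?_⟩
    have hne : ξ + δ - ξ ≠ 0 := by nlinarith
    field_simp at hslope
    have hFd : F (ξ + δ) - F ξ = δ * iteratedDeriv (k + 1 + 1) f ζ := by
      rw [← hslope]; ring
    calc fdiff δ (k + 1 + 1) f y = fdiff δ (k + 1) g y := by rw [fdiff]
      _ = δ ^ (k + 1) * iteratedDeriv (k + 1) g ξ := heq
      _ = δ ^ (k + 1) * (F (ξ + δ) - F ξ) := by rw [hsplit]
      _ = δ ^ (k + 1 + 1) * iteratedDeriv (k + 1 + 1) f ζ := by rw [hFd]; ring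

lemma fdiff_mvt' (δ : ℝ) (hδ : 0 < δ) (k : ℕ) (hk : 0 < k) (f : ℝ → ℝ) (y : ℝ)
    (h : ∀ u ∈ Set.Icc y (y + k * δ), ContDiffAt ℝ k f u) :
    ∃ ξ ∈ Set.Ioo y (y + k * δ), fdiff δ k f y = δ ^ k * iteratedDeriv k f ξ := by
  obtain ⟨k', rfl⟩ := Nat.exists_eq_succ_of_ne_zero hk.ne'
  exact fdiff_mvt δ hδ k' f y h

lemma window (n : ℕ) (hn : 0 < n) (f : ℝ → ℝ) (c s : ℝ) (hs : 0 < s)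
    (hf : ∀ u ∈ Set.Icc c (c + s), ContDiffAt ℝ n f u)
    (M₀ Mₙ : ℝ)
    (h0 : ∀ u ∈ Set.Icc c (c + s), |f u| ≤ M₀)
    (hN : ∀ u ∈ Set.Icc c (c + s), |iteratedDeriv n f u| ≤ Mₙ) :
    ∀ m : ℕ, m ≤ n → ∀ t ∈ Set.Icc c (c + s),
      s ^ (n - m) * |iteratedDeriv (n - m) f t| ≤
        (m : ℝ) * ((2 * n) ^ n * M₀) + s ^ n * Mₙ := by
  have hcW : c ∈ Set.Icc c (c + s) := ⟨le_refl c, by linarith⟩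
  have hM₀ : 0 ≤ M₀ := le_trans (abs_nonneg _) (h0 c hcW)
  have hMₙ : 0 ≤ Mₙ := le_trans (abs_nonneg _) (hN c hcW)
  have h2n : (1:ℝ) ≤ 2 * n := by
    have : (1:ℝ) ≤ (n:ℝ) := by exact_mod_cast hn
    linarith
  have h2npow : (1:ℝ) ≤ (2 * n) ^ n := one_le_pow₀ h2n
  intro m
  induction m with
  | zero =>
    intro _ t ht
    simpa using mul_le_mul_of_nonneg_left (hN t ht) (pow_nonneg hs.le n)
  | succ m ih =>
    intro hm1 t ht
    have hm : m ≤ n := le_trans (Nat.le_succ m) hm1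
    set k := n - (m + 1) with hkdef
    rcases Nat.eq_zero_or_pos k with hk0 | hkpos
    · rw [hk0]
      have h1 : |f t| ≤ M₀ := h0 t ht
      have h2 : s ^ 0 * |iteratedDeriv 0 f t| = |f t| := by simp
      have h3 : 0 ≤ s ^ n * Mₙ := by positivity
      rw [h2]
      push_cast
      nlinarith [h1, h2npow, hM₀, h3, mul_le_mul_of_nonneg_right h2npow hM₀,
        mul_nonneg (mul_nonneg (Nat.cast_nonneg m) (le_trans zero_le_one h2npow)) hM₀]
    · have hk1 : k + 1 = n - m := by omega
      have hkn : k + 1 ≤ n := by omega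
      have hnR : (0:ℝ) < n := by exact_mod_cast hn
      obtain ⟨δ, hδ, hsδ⟩ : ∃ δ : ℝ, 0 < δ ∧ s = (n:ℝ) * δ :=
        ⟨s / n, div_pos hs hnR, by field_simp⟩
      have hkδ : (k:ℝ) * δ ≤ s := by
        have : (k:ℝ) ≤ n := by exact_mod_cast Nat.sub_le n (m+1)
        nlinarith
      have hsubW : Set.Icc c (c + (k:ℝ) * δ) ⊆ Set.Icc c (c + s) := fun u hu =>
        ⟨hu.1, le_trans hu.2 (by linarith)⟩
      have hfk : ∀ u ∈ Set.Icc c (c + (k:ℝ) * δ), ContDiffAt ℝ k f u := fun u hu =>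
        (hf u (hsubW hu)).of_le (by exact_mod_cast (Nat.sub_le n (m+1) : k ≤ n))
      obtain ⟨ξ, hξmem, hξeq⟩ := fdiff_mvt' δ hδ k hkpos f c hfk
      have hξW : ξ ∈ Set.Icc c (c + s) := hsubW (Set.Ioo_subset_Icc_self hξmem)
      have hfd : |fdiff δ k f c| ≤ 2 ^ k * M₀ :=
        fdiff_bound δ hδ k f c M₀ (fun u hu => h0 u (hsubW hu))
      have hξval : δ ^ k * |iteratedDeriv k f ξ| ≤ 2 ^ k * M₀ := by
        have e : |δ ^ k * iteratedDeriv k f ξ| = δ ^ k * |iteratedDeriv k f ξ| := by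
          rw [abs_mul, abs_pow, abs_of_pos hδ]
        rw [← e, ← hξeq]; exact hfd
      have hIH : ∀ u ∈ Set.Icc c (c + s), s ^ (k+1) * |iteratedDeriv (k+1) f u| ≤
          (m:ℝ) * ((2*n)^n * M₀) + s ^ n * Mₙ := by
        intro u hu
        have := ih hm u hu
        rwa [← hk1] at this
      obtain ⟨R, hR⟩ : ∃ R : ℝ, R = (m:ℝ) * ((2*(n:ℝ))^n * M₀) + s ^ n * Mₙ := ⟨_, rfl⟩
      rw [← hR] at hIH
      have hRpos : 0 ≤ R := by rw [hR]; positivity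
      obtain ⟨K, hKpos, e2⟩ : ∃ K : ℝ, 0 ≤ K ∧ s ^ (k+1) * K = R :=
        ⟨R / s ^ (k+1), by positivity, by field_simp⟩
      have hKbound : ∀ u ∈ Set.Icc c (c + s), ‖deriv (iteratedDeriv k f) u‖ ≤ K := by
        intro u hu
        rw [← iteratedDeriv_succ, Real.norm_eq_abs]
        have h5 := hIH u hu
        rw [← e2] at h5
        exact le_of_mul_le_mul_left h5 (pow_pos hs (k+1))
      have hd : ∀ u ∈ Set.Icc c (c + s), DifferentiableAt ℝ (iteratedDeriv k f) u := by
        intro u hu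
        exact (itD_hasDerivAt ((hf u hu).of_le
          (by exact_mod_cast hkn : ((k+1:ℕ):WithTop ℕ∞) ≤ (n:ℕ)))).differentiableAt
      have hmvt := (convex_Icc c (c + s)).norm_image_sub_le_of_norm_deriv_le hd hKbound hξW ht
      have htξ : ‖t - ξ‖ ≤ s := by
        obtain ⟨a1,a2⟩ := ht; obtain ⟨b1,b2⟩ := hξW
        rw [Real.norm_eq_abs, abs_le]; constructor <;> linarith
      have hstep : |iteratedDeriv k f t| ≤ |iteratedDeriv k f ξ| + K * s := by
        have h1 : ‖iteratedDeriv k f t - iteratedDeriv k f ξ‖ ≤ K * s :=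
          le_trans hmvt (mul_le_mul_of_nonneg_left htξ hKpos)
        have h2 := abs_add_le (iteratedDeriv k f ξ) (iteratedDeriv k f t - iteratedDeriv k f ξ)
        rw [Real.norm_eq_abs] at h1
        simp only [add_sub_cancel] at h2
        linarith
      have e3 : (n:ℝ)^k * (2 ^ k * M₀) ≤ (2*(n:ℝ))^n * M₀ := by
        have e4 : ((2:ℝ) * n) ^ k ≤ (2*n)^n := pow_le_pow_right₀ h2n (by omega)
        have e5 : ((2:ℝ) * n) ^ k = 2^k * (n:ℝ)^k := mul_pow 2 (n:ℝ) k
        nlinarith [e4, e5, hM₀]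
      have hfinal : s ^ k * |iteratedDeriv k f t| ≤ (2*(n:ℝ))^n * M₀ + R := by
        have e1 : s ^ k = (n:ℝ)^k * δ ^ k := by rw [hsδ, mul_pow]
        calc s^k * |iteratedDeriv k f t| ≤ s^k * (|iteratedDeriv k f ξ| + K * s) :=
              mul_le_mul_of_nonneg_left hstep (by positivity)
          _ = (n:ℝ)^k * (δ^k * |iteratedDeriv k f ξ|) + s^k * (K * s) := by rw [e1]; ring
          _ ≤ (n:ℝ)^k * (2^k * M₀) + R := by
              have e2' : s ^ k * (K * s) = R := by rw [← e2]; ring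
              exact add_le_add (mul_le_mul_of_nonneg_left hξval (by positivity)) (le_of_eq e2')
          _ ≤ (2*(n:ℝ))^n * M₀ + R := by linarith [e3]
      have hgoal : ((m:ℝ)+1) * ((2 * (n:ℝ)) ^ n * M₀) + s ^ n * Mₙ =
          (2*(n:ℝ))^n * M₀ + R := by rw [hR]; ring
      push_cast
      rw [hgoal]
      exact hfinal

set_option maxHeartbeats 1000000 in
/-- there is a constant `C_n` depending only on `n` such that for every
compact interval `I' = [a,b]`, every `ℓ > 0`, every `f ∈ C^n(I')`, and every
`j ∈ {0,…,n}`,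
`min{|I'|^j, ℓ^j} · sup_{I'} |f^{(j)}| ≤ C_n (sup_{I'} |f| + ℓ^n sup_{I'} |f^{(n)}|)`. -/
theorem statement15 (n : ℕ) (hn : 0 < n) :
    ∃ C : ℝ, 0 < C ∧
      ∀ a b : ℝ, a < b → ∀ ℓ : ℝ, 0 < ℓ →
        ∀ f : ℝ → ℝ, ContDiffOn ℝ n f (Set.Icc a b) →
          ∀ M₀ Mₙ : ℝ,
            (∀ x ∈ Set.Icc a b, |f x| ≤ M₀) →
            (∀ x ∈ Set.Icc a b, |iteratedDerivWithin n f (Set.Icc a b) x| ≤ Mₙ) →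
            ∀ j ≤ n, ∀ x ∈ Set.Icc a b,
              min ((b - a) ^ j) (ℓ ^ j) * |iteratedDerivWithin j f (Set.Icc a b) x| ≤
                C * (M₀ + ℓ ^ n * Mₙ) := by
  refine ⟨2 ^ n * ((n : ℝ) * (2 * (n : ℝ)) ^ n + 1), by positivity, ?_⟩
  intro a b hab ℓ hℓ f hf M₀ Mₙ hM₀ hMₙ j hj x hx
  have haI : a ∈ Set.Icc a b := ⟨le_refl a, hab.le⟩
  have hM₀0 : 0 ≤ M₀ := le_trans (abs_nonneg _) (hM₀ a haI)
  have hMₙ0 : 0 ≤ Mₙ := le_trans (abs_nonneg _) (hMₙ a haI)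
  set C := 2 ^ n * ((n : ℝ) * (2 * (n : ℝ)) ^ n + 1) with hC
  have key : ∀ y ∈ Set.Ioo a b,
      min ((b - a) ^ j) (ℓ ^ j) * |iteratedDerivWithin j f (Set.Icc a b) y| ≤
        C * (M₀ + ℓ ^ n * Mₙ) := by
    intro y hy
    rw [itDW_Icc hy j f]
    obtain ⟨hay, hyb⟩ := hy
    have hq0 : 0 < min (b - a) ℓ := lt_min (by linarith) hℓ
    obtain ⟨q, hqdef⟩ : ∃ q : ℝ, q = min (b - a) ℓ := ⟨_, rfl⟩
    have hq0' : 0 < q := hqdef ▸ hq0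
    have hqba : q ≤ b - a := hqdef ▸ min_le_left _ _
    have hqℓ : q ≤ ℓ := hqdef ▸ min_le_right _ _
    obtain ⟨s, hsdef⟩ : ∃ s : ℝ, s = q / 2 := ⟨_, rfl⟩
    have hs0 : 0 < s := by rw [hsdef]; positivity
    have hsba : s < b - a := by rw [hsdef]; linarith
    have hsℓ : s ≤ ℓ := by rw [hsdef]; linarith
    have hq2s : q = 2 * s := by rw [hsdef]; ring
    obtain ⟨c, hcval⟩ : ∃ c : ℝ, (c - a) * (b - a) = (y - a) * (b - a - s) :=
      ⟨a + (y - a) * (b - a - s) / (b - a), by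
        rw [add_sub_cancel_left, div_mul_cancel₀ _ (by linarith : (b : ℝ) - a ≠ 0)]⟩
    have hba : 0 < b - a := by linarith
    have hbas : 0 < b - a - s := by linarith
    have hya : 0 < y - a := by linarith
    have hca : a < c := by nlinarith [mul_pos hya hbas]
    have hcsb : c + s < b := by nlinarith [mul_lt_mul_of_pos_right (show y - a < b - a by linarith) hbas]
    have hcy : c ≤ y := by nlinarith [mul_le_mul_of_nonneg_left (show b - a - s ≤ b - a by linarith) hya.le]
    have hycs : y ≤ c + s := by nlinarith [mul_le_mul_of_nonneg_right (show y - a ≤ b - a by linarith) hs0.le]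
    have hWI : Set.Icc c (c + s) ⊆ Set.Ioo a b := fun u hu =>
      ⟨lt_of_lt_of_le hca hu.1, lt_of_le_of_lt hu.2 hcsb⟩
    have hfW : ∀ u ∈ Set.Icc c (c + s), ContDiffAt ℝ n f u := by
      intro u hu
      obtain ⟨h1, h2⟩ := hWI hu
      exact hf.contDiffAt (Icc_mem_nhds h1 h2)
    have h0W : ∀ u ∈ Set.Icc c (c + s), |f u| ≤ M₀ := fun u hu =>
      hM₀ u (Set.Ioo_subset_Icc_self (hWI hu))
    have hNW : ∀ u ∈ Set.Icc c (c + s), |iteratedDeriv n f u| ≤ Mₙ := by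
      intro u hu
      rw [← itDW_Icc (hWI hu) n f]
      exact hMₙ u (Set.Ioo_subset_Icc_self (hWI hu))
    have hw := window n hn f c s hs0 hfW M₀ Mₙ h0W hNW (n - j) (Nat.sub_le n j) y ⟨hcy, hycs⟩
    rw [Nat.sub_sub_self hj] at hw
    -- hw : s ^ j * |iteratedDeriv j f y| ≤ ↑(n-j) * ((2*↑n)^n * M₀) + s^n * Mₙ
    have hcast : ((n - j : ℕ) : ℝ) ≤ (n : ℝ) := by exact_mod_cast Nat.sub_le n j
    have habs : 0 ≤ |iteratedDeriv j f y| := abs_nonneg _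
    have h2npow : (0:ℝ) ≤ (2 * (n : ℝ)) ^ n := by positivity
    have hWnn : 0 ≤ ((n - j : ℕ) : ℝ) * ((2 * (n:ℝ)) ^ n * M₀) + s ^ n * Mₙ := by positivity
    have hminq : min ((b - a) ^ j) (ℓ ^ j) ≤ q ^ j := by
      rcases le_total (b - a) ℓ with h | h
      · have : q = b - a := by rw [hqdef, min_eq_left h]
        rw [this]; exact min_le_left _ _
      · have : q = ℓ := by rw [hqdef, min_eq_right h]
        rw [this]; exact min_le_right _ _
    have hsn : s ^ n ≤ ℓ ^ n := pow_le_pow_left₀ hs0.le hsℓ n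
    have h2j : (2:ℝ) ^ j ≤ 2 ^ n := pow_le_pow_right₀ one_le_two hj
    calc min ((b - a) ^ j) (ℓ ^ j) * |iteratedDeriv j f y|
        ≤ q ^ j * |iteratedDeriv j f y| := mul_le_mul_of_nonneg_right hminq habs
      _ = 2 ^ j * (s ^ j * |iteratedDeriv j f y|) := by rw [hq2s, mul_pow]; ring
      _ ≤ 2 ^ j * (((n - j : ℕ) : ℝ) * ((2 * (n:ℝ)) ^ n * M₀) + s ^ n * Mₙ) :=
          mul_le_mul_of_nonneg_left hw (by positivity)
      _ ≤ 2 ^ n * (((n - j : ℕ) : ℝ) * ((2 * (n:ℝ)) ^ n * M₀) + s ^ n * Mₙ) :=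
          mul_le_mul_of_nonneg_right h2j hWnn
      _ ≤ 2 ^ n * ((n : ℝ) * ((2 * (n:ℝ)) ^ n * M₀) + ℓ ^ n * Mₙ) := by
          refine mul_le_mul_of_nonneg_left ?_ (by positivity)
          refine add_le_add (mul_le_mul_of_nonneg_right hcast (by positivity))
            (mul_le_mul_of_nonneg_right hsn hMₙ0)
      _ ≤ C * (M₀ + ℓ ^ n * Mₙ) := by
          have hp4 : (0:ℝ) ≤ 2^n * (((n:ℝ) * (2*(n:ℝ))^n) * (ℓ^n * Mₙ)) + 2^n * M₀ := by
            positivity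
          have hexp : C * (M₀ + ℓ ^ n * Mₙ) =
              2 ^ n * ((n : ℝ) * ((2 * (n:ℝ)) ^ n * M₀) + ℓ ^ n * Mₙ)
              + (2^n * (((n:ℝ) * (2*(n:ℝ))^n) * (ℓ^n * Mₙ)) + 2^n * M₀) := by rw [hC]; ring
          linarith
  by_cases hxI : x ∈ Set.Ioo a b
  · exact key x hxI
  · have hcl : x ∈ closure (Set.Ioo a b) := by
      rw [closure_Ioo (ne_of_lt hab)]; exact hx
    have hnb : (nhdsWithin x (Set.Ioo a b)).NeBot := mem_closure_iff_nhdsWithin_neBot.mp hcl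
    have h1 : ContinuousOn (iteratedDerivWithin j f (Set.Icc a b)) (Set.Icc a b) :=
      hf.continuousOn_iteratedDerivWithin (by exact_mod_cast hj) (uniqueDiffOn_Icc hab)
    have hcont : ContinuousWithinAt
        (fun y => min ((b - a) ^ j) (ℓ ^ j) * |iteratedDerivWithin j f (Set.Icc a b) y|)
        (Set.Ioo a b) x :=
      by
        have hcw : ContinuousWithinAt
            (fun y => min ((b - a) ^ j) (ℓ ^ j) * |iteratedDerivWithin j f (Set.Icc a b) y|)
            (Set.Icc a b) x := ((h1 x hx).abs).const_mul _
        exact hcw.mono Set.Ioo_subset_Icc_self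
    exact le_of_tendsto hcont (eventually_nhdsWithin_of_forall key)
end
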